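/- arXiv:2008.12666 — 6 statements merged into one kernel-verified Lean document; each statement's English description precedes it below -/
import Mathlib

section
/- Let N ≥ 2 be an integer and 0 < c < 1. Let h : [0,∞) → [0,∞) be continuous and nondecreasing with h(0) = 0, h(s) > 0 for s > 0, and such that s ↦ s^{(N-1)/N}/h(s) is nondecreasing on (0,∞). Let V : [0,∞) → [0,∞) be a C¹ increasing bijection with V(0) = 0 satisfying c·h(V(R)) ≤ V'(R) ≤ c^{-1}·h(V(R)) for all R > 0. Then there exists a constant γ > 1, depending only on N and c, such that: γ^{-1}·λ·V(R) ≤ V(λR) ≤ γ·λ^N·V(R) for all λ ≥ 1 and R > 0, and γ^{-1}·λ^N·V(R) ≤ V(λR) ≤ γ·λ·V(R) for all 0 < λ ≤ 1 and R > 0. -/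
/-- Let `N ≥ 2`, `0 < c < 1`, let `h` be an isoperimetric profile
(continuous, nondecreasing, `h 0 = 0`, `h > 0` on `(0,∞)`, with
`s ↦ s ^ ((N-1)/N) / h s` nondecreasing on `(0,∞)`), and let `V` be a `C¹` increasing
bijection of `[0,∞)` with `V 0 = 0` and `c * h (V R) ≤ V' R ≤ c⁻¹ * h (V R)` for `R > 0`.
Then there is `γ > 1` with `γ⁻¹ * λ * V R ≤ V (λ R) ≤ γ * λ ^ N * V R` for `λ ≥ 1` and
`γ⁻¹ * λ ^ N * V R ≤ V (λ R) ≤ γ * λ * V R` for `0 < λ ≤ 1`, for all `R > 0`. -/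
theorem volume_doubling_from_isoperimetry
    (N : ℕ) (hN : 2 ≤ N) (c : ℝ) (hc0 : 0 < c) (hc1 : c < 1)
    (h : ℝ → ℝ)
    (hh_cont : ContinuousOn h (Set.Ici 0))
    (hh_mono : MonotoneOn h (Set.Ici 0))
    (hh0 : h 0 = 0)
    (hh_pos : ∀ s : ℝ, 0 < s → 0 < h s)
    (hω_mono : MonotoneOn (fun s : ℝ => s ^ (((N : ℝ) - 1) / N) / h s) (Set.Ioi 0))
    (V V' : ℝ → ℝ)
    (hV_deriv : ∀ R : ℝ, 0 ≤ R → HasDerivAt V (V' R) R)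
    (hV'_cont : ContinuousOn V' (Set.Ici 0))
    (hV_mono : StrictMonoOn V (Set.Ici 0))
    (hV0 : V 0 = 0)
    (hV_surj : ∀ y : ℝ, 0 ≤ y → ∃ x : ℝ, 0 ≤ x ∧ V x = y)
    (hV'_lb : ∀ R : ℝ, 0 < R → c * h (V R) ≤ V' R)
    (hV'_ub : ∀ R : ℝ, 0 < R → V' R ≤ c⁻¹ * h (V R)) :
    ∃ γ : ℝ, 1 < γ ∧
      (∀ lam R : ℝ, 1 ≤ lam → 0 < R →
        γ⁻¹ * lam * V R ≤ V (lam * R) ∧ V (lam * R) ≤ γ * lam ^ (N : ℝ) * V R) ∧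
      (∀ lam R : ℝ, 0 < lam → lam ≤ 1 → 0 < R →
        γ⁻¹ * lam ^ (N : ℝ) * V R ≤ V (lam * R) ∧ V (lam * R) ≤ γ * lam * V R) := by
  have hNR : (0:ℝ) < (N:ℝ) := by
    have : 0 < N := lt_of_lt_of_le two_pos hN
    exact_mod_cast this
  set α : ℝ := ((N:ℝ) - 1) / N with hα
  have hVpos : ∀ R : ℝ, 0 < R → 0 < V R := by
    intro R hR
    have := hV_mono (Set.mem_Ici.2 le_rfl) (Set.mem_Ici.2 hR.le) hR
    rwa [hV0] at this
  have hVnonneg : ∀ R : ℝ, 0 ≤ R → 0 ≤ V R := by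
    intro R hR
    rcases hR.lt_or_eq with h' | h'
    · exact (hVpos R h').le
    · rw [← h', hV0]
  have hVle : ∀ s t : ℝ, 0 ≤ s → s ≤ t → V s ≤ V t := by
    intro s t hs hst
    exact hV_mono.monotoneOn (Set.mem_Ici.2 hs) (Set.mem_Ici.2 (hs.trans hst)) hst
  have hV'pos : ∀ R : ℝ, 0 < R → 0 < V' R := by
    intro R hR
    exact lt_of_lt_of_le (mul_pos hc0 (hh_pos _ (hVpos R hR))) (hV'_lb R hR)
  -- almost-nondecreasing V'
  have keyV : ∀ s t : ℝ, 0 < s → s ≤ t → c * c * V' s ≤ V' t := by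
    intro s t hs hst
    have ht : 0 < t := hs.trans_le hst
    have h2 : h (V s) ≤ h (V t) :=
      hh_mono (Set.mem_Ici.2 (hVpos s hs).le) (Set.mem_Ici.2 (hVpos t ht).le)
        (hVle s t hs.le hst)
    calc c * c * V' s ≤ c * c * (c⁻¹ * h (V s)) := by
          exact mul_le_mul_of_nonneg_left (hV'_ub s hs) (by positivity)
      _ = c * h (V s) := by field_simp
      _ ≤ c * h (V t) := mul_le_mul_of_nonneg_left h2 hc0.le
      _ ≤ V' t := hV'_lb t ht
  set F : ℝ → ℝ := fun x => V x ^ (N:ℝ)⁻¹ with hF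
  set F' : ℝ → ℝ := fun x => V' x * (N:ℝ)⁻¹ * V x ^ ((N:ℝ)⁻¹ - 1) with hF'
  have hexp : (N:ℝ)⁻¹ - 1 = -α := by
    rw [hα]; field_simp; ring
  have hF0 : F 0 = 0 := by
    simp only [hF, hV0]
    exact Real.zero_rpow (by positivity)
  have hF'eq : ∀ x : ℝ, 0 < x → F' x = (N:ℝ)⁻¹ * (V' x / V x ^ α) := by
    intro x hx
    simp only [hF', hexp, Real.rpow_neg (hVpos x hx).le]
    rw [div_eq_mul_inv]; ring
  have hF'pos : ∀ x : ℝ, 0 < x → 0 < F' x := by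
    intro x hx
    rw [hF'eq x hx]
    have := hV'pos x hx
    have := Real.rpow_pos_of_pos (hVpos x hx) α
    positivity
  -- almost-nonincreasing F'
  have keyF : ∀ s t : ℝ, 0 < s → s ≤ t → c * c * F' t ≤ F' s := by
    intro s t hs hst
    have ht : 0 < t := hs.trans_le hst
    have hVs := hVpos s hs
    have hVt := hVpos t ht
    have hVsα := Real.rpow_pos_of_pos hVs α
    have hVtα := Real.rpow_pos_of_pos hVt α
    have hω := hω_mono (Set.mem_Ioi.2 hVs) (Set.mem_Ioi.2 hVt) (hVle s t hs.le hst)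
    simp only at hω
    have hg : h (V t) / V t ^ α ≤ h (V s) / V s ^ α := by
      rw [div_le_div_iff₀ (hh_pos _ hVs) (hh_pos _ hVt)] at hω
      rw [div_le_div_iff₀ hVtα hVsα]
      linear_combination hω
    have hA1 : V' t / V t ^ α ≤ c⁻¹ * (h (V t) / V t ^ α) := by
      rw [← mul_div_assoc]
      gcongr
      exact hV'_ub t ht
    have hB1 : h (V s) / V s ^ α ≤ c⁻¹ * (V' s / V s ^ α) := by
      rw [← mul_div_assoc]
      gcongr
      calc h (V s) = c⁻¹ * (c * h (V s)) := by field_simp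
        _ ≤ c⁻¹ * V' s := by
            exact mul_le_mul_of_nonneg_left (hV'_lb s hs) (by positivity)
    have hAB : c * c * (V' t / V t ^ α) ≤ V' s / V s ^ α := by
      calc c * c * (V' t / V t ^ α) ≤ c * c * (c⁻¹ * (h (V t) / V t ^ α)) :=
            mul_le_mul_of_nonneg_left hA1 (by positivity)
        _ = c * (h (V t) / V t ^ α) := by field_simp
        _ ≤ c * (h (V s) / V s ^ α) := mul_le_mul_of_nonneg_left hg hc0.le
        _ ≤ c * (c⁻¹ * (V' s / V s ^ α)) := mul_le_mul_of_nonneg_left hB1 hc0.le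
        _ = V' s / V s ^ α := by field_simp
    rw [hF'eq t ht, hF'eq s hs]
    calc c * c * ((N:ℝ)⁻¹ * (V' t / V t ^ α)) = (N:ℝ)⁻¹ * (c * c * (V' t / V t ^ α)) := by ring
      _ ≤ (N:ℝ)⁻¹ * (V' s / V s ^ α) := mul_le_mul_of_nonneg_left hAB (by positivity)
  -- MVT for V
  have mvtV : ∀ a b : ℝ, 0 ≤ a → a < b → ∃ ξ ∈ Set.Ioo a b, V b - V a = (b - a) * V' ξ := by
    intro a b ha hab
    obtain ⟨ξ, hξ, e⟩ := exists_hasDerivAt_eq_slope V V' hab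
      (fun x hx => (hV_deriv x (ha.trans hx.1)).continuousAt.continuousWithinAt)
      (fun x hx => hV_deriv x (ha.trans hx.1.le))
    exact ⟨ξ, hξ, by rw [e, mul_div_cancel₀ _ (sub_ne_zero.2 hab.ne')]⟩
  -- MVT for F
  have mvtF : ∀ a b : ℝ, 0 ≤ a → a < b → ∃ ξ ∈ Set.Ioo a b, F b - F a = (b - a) * F' ξ := by
    intro a b ha hab
    have hcont : ContinuousOn F (Set.Icc a b) := by
      apply ContinuousOn.rpow_const
        (fun x hx => (hV_deriv x (ha.trans hx.1)).continuousAt.continuousWithinAt)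
      intro x hx
      exact Or.inr (by positivity)
    obtain ⟨ξ, hξ, e⟩ := exists_hasDerivAt_eq_slope F F' hab hcont
      (fun x hx => (hV_deriv x (ha.trans hx.1.le)).rpow_const
        (Or.inl (hVpos x (lt_of_le_of_lt ha hx.1)).ne'))
    exact ⟨ξ, hξ, by rw [e, mul_div_cancel₀ _ (sub_ne_zero.2 hab.ne')]⟩
  have hFval : ∀ x : ℝ, 0 ≤ x → F x ^ (N:ℝ) = V x := by
    intro x hx
    exact Real.rpow_inv_rpow (hVnonneg x hx) hNR.ne'
  have hFnonneg : ∀ x : ℝ, 0 ≤ x → 0 ≤ F x := fun x hx => Real.rpow_nonneg (hVnonneg x hx) _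
  -- Part 1: lam ≥ 1
  have part1 : ∀ lam R : ℝ, 1 ≤ lam → 0 < R →
      c * c * (lam * V R) ≤ V (lam * R) ∧
      V (lam * R) ≤ (c⁻¹ * c⁻¹) ^ N * (lam ^ (N:ℝ) * V R) := by
    intro lam R hlam hR
    rcases hlam.lt_or_eq with hlam1 | hlam1
    swap
    · -- lam = 1
      subst hlam1
      constructor
      · rw [one_mul, one_mul]
        have hcc : c * c ≤ 1 := by nlinarith
        nlinarith [mul_nonneg (sub_nonneg.2 hcc) (hVpos R hR).le]
      · rw [one_mul, Real.one_rpow, one_mul]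
        have h1 : (1:ℝ) ≤ (c⁻¹ * c⁻¹) ^ N := by
          apply one_le_pow₀
          nlinarith [mul_pos hc0 hc0, (one_lt_inv₀ hc0).mpr hc1]
        nlinarith [mul_nonneg (sub_nonneg.2 h1) (hVpos R hR).le]
    -- lam > 1
    have hlR : R < lam * R := by nlinarith
    constructor
    · -- lower bound via V
      obtain ⟨ξ₀, hξ₀, e₀⟩ := mvtV 0 R le_rfl hR
      obtain ⟨ξ, hξ, e⟩ := mvtV R (lam * R) hR.le hlR
      rw [hV0, sub_zero, sub_zero] at e₀
      have hcmp := keyV ξ₀ ξ hξ₀.1 (hξ₀.2.trans hξ.1).le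
      have hξ₀pos := hV'pos ξ₀ hξ₀.1
      have hcc : c * c ≤ 1 := by nlinarith
      have h5 : c * c * (lam * V R) = c * c * lam * (R * V' ξ₀) := by rw [e₀]; ring
      have h1 : (lam * R - R) * (c * c * V' ξ₀) ≤ (lam * R - R) * V' ξ :=
        mul_le_mul_of_nonneg_left hcmp (sub_nonneg.2 hlR.le)
      have h3 : c * c * (R * V' ξ₀) ≤ 1 * (R * V' ξ₀) :=
        mul_le_mul_of_nonneg_right hcc (mul_pos hR hξ₀pos).le
      nlinarith [h5, h1, h3, e, e₀]
    · -- upper bound via F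
      obtain ⟨ξ₀, hξ₀, e₀⟩ := mvtF 0 R le_rfl hR
      obtain ⟨ξ, hξ, e⟩ := mvtF R (lam * R) hR.le hlR
      rw [hF0, sub_zero, sub_zero] at e₀
      have hcmp := keyF ξ₀ ξ hξ₀.1 (hξ₀.2.trans hξ.1).le
      have hξ₀pos := hF'pos ξ₀ hξ₀.1
      have key : c * c * F (lam * R) ≤ lam * F R := by
        have hcc : c * c ≤ 1 := by nlinarith
        have hFRpos : 0 < F R := by rw [e₀]; exact mul_pos hR hξ₀pos
        have h5 : c * c * F (lam * R) = c * c * F R + (lam * R - R) * (c * c * F' ξ) := by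
          linear_combination (c * c) * e
        have h1 : (lam * R - R) * (c * c * F' ξ) ≤ (lam * R - R) * F' ξ₀ :=
          mul_le_mul_of_nonneg_left hcmp (sub_nonneg.2 hlR.le)
        have h4 : (lam * R - R) * F' ξ₀ = (lam - 1) * F R := by rw [e₀]; ring
        have h3 : c * c * F R ≤ 1 * F R := mul_le_mul_of_nonneg_right hcc hFRpos.le
        linarith [h5, h1, h4, h3]
      have hFstep : F (lam * R) ≤ c⁻¹ * c⁻¹ * lam * F R := by
        have h2 := mul_le_mul_of_nonneg_left key (by positivity : (0:ℝ) ≤ c⁻¹ * c⁻¹)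
        calc F (lam * R) = c⁻¹ * c⁻¹ * (c * c * F (lam * R)) := by field_simp
          _ ≤ c⁻¹ * c⁻¹ * (lam * F R) := h2
          _ = c⁻¹ * c⁻¹ * lam * F R := by ring
      have hlRpos : 0 < lam * R := hR.trans hlR
      calc V (lam * R) = F (lam * R) ^ (N:ℝ) := (hFval _ hlRpos.le).symm
        _ ≤ (c⁻¹ * c⁻¹ * lam * F R) ^ (N:ℝ) :=
            Real.rpow_le_rpow (hFnonneg _ hlRpos.le) hFstep hNR.le
        _ = (c⁻¹ * c⁻¹ * lam) ^ (N:ℝ) * V R := by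
            rw [Real.mul_rpow (by positivity) (hFnonneg _ hR.le), hFval _ hR.le]
        _ = (c⁻¹ * c⁻¹) ^ (N:ℝ) * (lam ^ (N:ℝ) * V R) := by
            rw [Real.mul_rpow (by positivity) (by linarith : (0:ℝ) ≤ lam)]
            ring
        _ = (c⁻¹ * c⁻¹) ^ N * (lam ^ (N:ℝ) * V R) := by
            rw [Real.rpow_natCast]
  -- assemble
  refine ⟨c⁻¹ ^ (2 * N), ?_, ?_, ?_⟩
  · exact one_lt_pow₀ ((one_lt_inv₀ hc0).mpr hc1) (by omega)
  · intro lam R hlam hR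
    obtain ⟨low, up⟩ := part1 lam R hlam hR
    have hγe : (c⁻¹ * c⁻¹) ^ N = c⁻¹ ^ (2 * N) := by
      rw [← sq, ← pow_mul]
    have hγinv : (c⁻¹ ^ (2 * N))⁻¹ ≤ c * c := by
      rw [← inv_pow, inv_inv, ← sq]
      exact pow_le_pow_of_le_one hc0.le hc1.le (by omega)
    constructor
    · calc (c⁻¹ ^ (2 * N))⁻¹ * lam * V R = (c⁻¹ ^ (2 * N))⁻¹ * (lam * V R) := by ring
        _ ≤ c * c * (lam * V R) := by
            apply mul_le_mul_of_nonneg_right hγinv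
            have := hVpos R hR
            positivity
        _ ≤ V (lam * R) := low
    · calc V (lam * R) ≤ (c⁻¹ * c⁻¹) ^ N * (lam ^ (N:ℝ) * V R) := up
        _ = c⁻¹ ^ (2 * N) * lam ^ (N:ℝ) * V R := by rw [hγe]; ring
  · intro lam R hlam0 hlam1 hR
    have hμ : (1:ℝ) ≤ lam⁻¹ := (one_le_inv₀ hlam0).mpr hlam1
    have hR' : 0 < lam * R := mul_pos hlam0 hR
    obtain ⟨low, up⟩ := part1 lam⁻¹ (lam * R) hμ hR'
    have hμR : lam⁻¹ * (lam * R) = R := by field_simp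
    rw [hμR] at low up
    have hγe : (c⁻¹ * c⁻¹) ^ N = c⁻¹ ^ (2 * N) := by rw [← sq, ← pow_mul]
    have hγpos : (0:ℝ) < c⁻¹ ^ (2 * N) := by positivity
    have hVlR := hVpos _ hR'
    have hVR := hVpos R hR
    constructor
    · -- lower: from up
      rw [hγe, Real.inv_rpow hlam0.le] at up
      have hlp : (0:ℝ) < lam ^ (N:ℝ) := Real.rpow_pos_of_pos hlam0 _
      calc (c⁻¹ ^ (2 * N))⁻¹ * lam ^ (N:ℝ) * V R
          ≤ (c⁻¹ ^ (2 * N))⁻¹ * lam ^ (N:ℝ) *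
            (c⁻¹ ^ (2 * N) * ((lam ^ (N:ℝ))⁻¹ * V (lam * R))) := by
            apply mul_le_mul_of_nonneg_left up (by positivity)
        _ = V (lam * R) := by field_simp
    · -- upper: from low
      have h1 : V (lam * R) ≤ c⁻¹ * c⁻¹ * lam * V R := by
        have h2 := mul_le_mul_of_nonneg_left low
          (by positivity : (0:ℝ) ≤ c⁻¹ * c⁻¹ * lam)
        calc V (lam * R) = c⁻¹ * c⁻¹ * lam * (c * c * (lam⁻¹ * V (lam * R))) := by
              field_simp
          _ ≤ c⁻¹ * c⁻¹ * lam * V R := h2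
      have h3 : c⁻¹ * c⁻¹ ≤ c⁻¹ ^ (2 * N) := by
        rw [← sq]
        exact pow_le_pow_right₀ ((one_le_inv₀ hc0).mpr hc1.le) (by omega)
      calc V (lam * R) ≤ c⁻¹ * c⁻¹ * lam * V R := h1
        _ ≤ c⁻¹ ^ (2 * N) * lam * V R := by
            apply mul_le_mul_of_nonneg_right (mul_le_mul_of_nonneg_right h3 hlam0.le)
            exact hVR.le
end

section
/- Let N ≥ 2 be an integer and let h : [0,∞) → [0,∞) be continuous and nondecreasing with h(0) = 0, h(s) > 0 for s > 0, and such that s ↦ s^{(N-1)/N}/h(s) is nondecreasing on (0,∞). Then for every v > 0: (N/2)·(2^{1/N} − 1)·v/h(v) ≤ ∫_0^v ds/h(s) ≤ N·v/h(v). -/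
open MeasureTheory

/-- Let `N ≥ 2` and let `h` be an isoperimetric profile (continuous,
nondecreasing, `h 0 = 0`, `h > 0` on `(0,∞)`, with `s ↦ s ^ ((N-1)/N) / h s`
nondecreasing on `(0,∞)`). Then for every `v > 0`:
`(N/2) * (2 ^ (1/N) - 1) * v / h v ≤ ∫_0^v ds / h s ≤ N * v / h v`. -/
theorem integral_inverse_isoperimetric_profile
    (N : ℕ) (hN : 2 ≤ N)
    (h : ℝ → ℝ)
    (hh_cont : ContinuousOn h (Set.Ici 0))
    (hh_mono : MonotoneOn h (Set.Ici 0))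
    (hh0 : h 0 = 0)
    (hh_pos : ∀ s : ℝ, 0 < s → 0 < h s)
    (hω_mono : MonotoneOn (fun s : ℝ => s ^ (((N : ℝ) - 1) / N) / h s) (Set.Ioi 0)) :
    ∀ v : ℝ, 0 < v →
      ((N : ℝ) / 2) * ((2 : ℝ) ^ ((N : ℝ)⁻¹) - 1) * v / h v ≤
          (∫ s in (0:ℝ)..v, (h s)⁻¹) ∧
        (∫ s in (0:ℝ)..v, (h s)⁻¹) ≤ (N : ℝ) * v / h v := by
  intro v hv
  have hNR : (0:ℝ) < N := by positivity
  have hNne : (N:ℝ) ≠ 0 := ne_of_gt hNR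
  have hN2 : (2:ℝ) ≤ N := by exact_mod_cast hN
  set a : ℝ := ((N : ℝ) - 1) / N with ha
  have ha_pos : 0 < a := by
    apply div_pos _ hNR; linarith
  have ha_lt1 : a < 1 := by
    rw [ha, div_lt_one hNR]; linarith
  have ha1 : -a + 1 = (N:ℝ)⁻¹ := by
    field_simp [ha]
    have haN : a * N = N - 1 := by rw [ha]; field_simp
    linear_combination -haN
  have hhv : 0 < h v := hh_pos v hv
  set C : ℝ := v ^ a / h v with hC
  have hC_nonneg : 0 ≤ C := div_nonneg (Real.rpow_nonneg hv.le _) hhv.le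
  -- pointwise key bound on (0, v]
  have key : ∀ s ∈ Set.Ioc (0:ℝ) v, (h s)⁻¹ ≤ C * s ^ (-a) := by
    intro s hs
    have hs0 : 0 < s := hs.1
    have hsh : 0 < h s := hh_pos s hs0
    have hmono := hω_mono (Set.mem_Ioi.mpr hs0) (Set.mem_Ioi.mpr hv) hs.2
    simp only [← ha] at hmono
    have hid : (h s)⁻¹ = (s ^ a / h s) * s ^ (-a) := by
      rw [Real.rpow_neg hs0.le]
      have hsa : (0:ℝ) < s ^ a := Real.rpow_pos_of_pos hs0 a
      field_simp
    rw [hid]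
    exact mul_le_mul_of_nonneg_right hmono (Real.rpow_nonneg hs0.le _)
  -- nonnegativity of (h s)⁻¹ for s ≥ 0
  have hinv_nonneg : ∀ s : ℝ, 0 ≤ s → 0 ≤ (h s)⁻¹ := by
    intro s hs
    rcases eq_or_lt_of_le hs with rfl | hs'
    · simp [hh0]
    · exact (inv_pos.mpr (hh_pos s hs')).le
  -- integrability of the dominating function
  have hg_int : IntervalIntegrable (fun s : ℝ => C * s ^ (-a)) volume 0 v :=
    (intervalIntegral.intervalIntegrable_rpow' (by linarith)).const_mul C
  -- integrability of (h s)⁻¹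
  have hf_int : IntervalIntegrable (fun s : ℝ => (h s)⁻¹) volume 0 v := by
    rw [intervalIntegrable_iff_integrableOn_Ioc_of_le hv.le]
    have hgI : IntegrableOn (fun s : ℝ => C * s ^ (-a)) (Set.Ioc 0 v) volume := by
      have := hg_int
      rwa [intervalIntegrable_iff_integrableOn_Ioc_of_le hv.le] at this
    have hmeas : AEStronglyMeasurable (fun s : ℝ => (h s)⁻¹)
        (volume.restrict (Set.Ioc (0:ℝ) v)) := by
      have hcont : ContinuousOn (fun s : ℝ => (h s)⁻¹) (Set.Ioc 0 v) := by
        apply ContinuousOn.inv₀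
        · exact hh_cont.mono (fun x hx => le_of_lt hx.1)
        · exact fun x hx => ne_of_gt (hh_pos x hx.1)
      exact hcont.aestronglyMeasurable measurableSet_Ioc
    apply Integrable.mono hgI hmeas
    rw [ae_restrict_iff' measurableSet_Ioc]
    filter_upwards with s hs
    rw [Real.norm_of_nonneg (hinv_nonneg s hs.1.le),
      Real.norm_of_nonneg (mul_nonneg hC_nonneg (Real.rpow_nonneg hs.1.le _))]
    exact key s hs
  -- compute the integral of the dominating function
  have hv1 : v ^ a * v ^ ((N:ℝ)⁻¹) = v := by
    rw [← Real.rpow_add hv, show a + (N:ℝ)⁻¹ = 1 by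
      field_simp [ha]
      have haN : a * N = N - 1 := by rw [ha]; field_simp
      linear_combination haN, Real.rpow_one]
  have hg_val : (∫ s in (0:ℝ)..v, C * s ^ (-a)) = (N:ℝ) * v / h v := by
    rw [intervalIntegral.integral_const_mul, integral_rpow (Or.inl (by linarith)),
      ha1, Real.zero_rpow (inv_ne_zero hNne), hC, sub_zero,
      div_eq_mul_inv (v ^ ((N:ℝ)⁻¹)), inv_inv,
      div_mul_eq_mul_div, ← mul_assoc, hv1, mul_comm v (N:ℝ)]
  -- integrability on the subintervals
  have hsub1 : IntervalIntegrable (fun s : ℝ => (h s)⁻¹) volume 0 (v/2) := by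
    apply hf_int.mono_set
    rw [Set.uIcc_of_le (by linarith : (0:ℝ) ≤ v/2), Set.uIcc_of_le hv.le]
    exact Set.Icc_subset_Icc le_rfl (by linarith)
  have hsub2 : IntervalIntegrable (fun s : ℝ => (h s)⁻¹) volume (v/2) v := by
    apply hf_int.mono_set
    rw [Set.uIcc_of_le (by linarith : v/2 ≤ v), Set.uIcc_of_le hv.le]
    exact Set.Icc_subset_Icc (by linarith) le_rfl
  constructor
  · -- lower bound
    have hc : ((N : ℝ) / 2) * ((2 : ℝ) ^ ((N : ℝ)⁻¹) - 1) ≤ 1 / 2 := by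
      have h2pow : (2:ℝ) ^ ((N : ℝ)⁻¹) ≤ 1 + (N:ℝ)⁻¹ := by
        have hb : (2:ℝ) ≤ (1 + (N:ℝ)⁻¹) ^ N := by
          have := one_add_mul_le_pow (a := (N:ℝ)⁻¹) (by have := inv_pos.mpr hNR; linarith) N
          rw [mul_inv_cancel₀ hNne] at this
          linarith
        calc (2:ℝ) ^ ((N : ℝ)⁻¹) ≤ ((1 + (N:ℝ)⁻¹) ^ N) ^ ((N : ℝ)⁻¹) :=
              Real.rpow_le_rpow (by norm_num) hb (by positivity)
          _ = 1 + (N:ℝ)⁻¹ := by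
              rw [← Real.rpow_natCast (1 + (N:ℝ)⁻¹) N, ← Real.rpow_mul (by positivity),
                mul_inv_cancel₀ hNne, Real.rpow_one]
      calc ((N : ℝ) / 2) * ((2 : ℝ) ^ ((N : ℝ)⁻¹) - 1)
          ≤ ((N : ℝ) / 2) * (N:ℝ)⁻¹ :=
            mul_le_mul_of_nonneg_left (by linarith) (by positivity)
        _ = 1 / 2 := by field_simp
    have hsplit : (∫ s in (0:ℝ)..v, (h s)⁻¹) =
        (∫ s in (0:ℝ)..(v/2), (h s)⁻¹) + (∫ s in (v/2)..v, (h s)⁻¹) := by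
      rw [intervalIntegral.integral_add_adjacent_intervals hsub1 hsub2]
    have h1 : 0 ≤ ∫ s in (0:ℝ)..(v/2), (h s)⁻¹ := by
      apply intervalIntegral.integral_nonneg (by linarith)
      intro s hs
      exact hinv_nonneg s hs.1
    have h2 : v / 2 * (h v)⁻¹ ≤ ∫ s in (v/2)..v, (h s)⁻¹ := by
      have := intervalIntegral.integral_mono_on (μ := volume)
        (f := fun _ : ℝ => (h v)⁻¹) (g := fun s : ℝ => (h s)⁻¹)
        (by linarith : v/2 ≤ v) intervalIntegrable_const hsub2
        (fun s hs => by
          have hs0 : 0 < s := by have := hs.1; linarith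
          have hle := hh_mono (Set.mem_Ici.mpr hs0.le)
            (Set.mem_Ici.mpr (by linarith : (0:ℝ) ≤ v)) hs.2
          exact inv_anti₀ (hh_pos s hs0) hle)
      rwa [intervalIntegral.integral_const, smul_eq_mul,
        show v - v/2 = v/2 by ring] at this
    have hfin : v / 2 * (h v)⁻¹ ≤ ∫ s in (0:ℝ)..v, (h s)⁻¹ := by
      rw [hsplit]; linarith
    calc ((N : ℝ) / 2) * ((2 : ℝ) ^ ((N : ℝ)⁻¹) - 1) * v / h v
        ≤ (1/2) * v / h v := by gcongr
      _ = v / 2 * (h v)⁻¹ := by ring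
      _ ≤ _ := hfin
  · -- upper bound
    rw [← hg_val]
    apply intervalIntegral.integral_mono_on hv.le hf_int hg_int
    intro s hs
    rcases eq_or_lt_of_le hs.1 with rfl | hs0
    · rw [hh0, Real.zero_rpow (neg_ne_zero.mpr (ne_of_gt ha_pos))]
      simp
    · exact key s ⟨hs0, hs.2⟩
end

section
/- Let N ≥ 2 be an integer and 0 < c < 1. Let h : [0,∞) → [0,∞) be continuous and nondecreasing with h(0) = 0, h(s) > 0 for s > 0, and such that s ↦ s^{(N-1)/N}/h(s) is nondecreasing on (0,∞). Let V : [0,∞) → [0,∞) be a C¹ increasing bijection with V(0) = 0 satisfying c·h(V(R)) ≤ V'(R) ≤ c^{-1}·h(V(R)) for all R > 0. Then there exists a constant γ > 1, depending only on N and c, such that γ^{-1}·R ≤ V(R)/h(V(R)) ≤ γ·R for all R > 0. -/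
/-- Under the hypotheses of Statement 5 (isoperimetric profile `h` and
volume function `V` with two-sided growth condition), there is `γ > 1` depending only on
`N` and `c` with `γ⁻¹ * R ≤ V R / h (V R) ≤ γ * R` for all `R > 0`. -/
theorem F_of_volume_comparable_to_radius
    (N : ℕ) (hN : 2 ≤ N) (c : ℝ) (hc0 : 0 < c) (hc1 : c < 1)
    (h : ℝ → ℝ)
    (hh_cont : ContinuousOn h (Set.Ici 0))
    (hh_mono : MonotoneOn h (Set.Ici 0))
    (hh0 : h 0 = 0)
    (hh_pos : ∀ s : ℝ, 0 < s → 0 < h s)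
    (hω_mono : MonotoneOn (fun s : ℝ => s ^ (((N : ℝ) - 1) / N) / h s) (Set.Ioi 0))
    (V V' : ℝ → ℝ)
    (hV_deriv : ∀ R : ℝ, 0 ≤ R → HasDerivAt V (V' R) R)
    (hV'_cont : ContinuousOn V' (Set.Ici 0))
    (hV_mono : StrictMonoOn V (Set.Ici 0))
    (hV0 : V 0 = 0)
    (hV_surj : ∀ y : ℝ, 0 ≤ y → ∃ x : ℝ, 0 ≤ x ∧ V x = y)
    (hV'_lb : ∀ R : ℝ, 0 < R → c * h (V R) ≤ V' R)
    (hV'_ub : ∀ R : ℝ, 0 < R → V' R ≤ c⁻¹ * h (V R)) :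
    ∃ γ : ℝ, 1 < γ ∧
      ∀ R : ℝ, 0 < R →
        γ⁻¹ * R ≤ V R / h (V R) ∧ V R / h (V R) ≤ γ * R := by
  have hNR : (2:ℝ) ≤ (N:ℝ) := by exact_mod_cast hN
  have hN0 : (0:ℝ) < (N:ℝ) := by linarith
  set p : ℝ := 1 / (N:ℝ) with hp_def
  set α : ℝ := ((N:ℝ) - 1) / (N:ℝ) with hα_def
  have hp_pos : 0 < p := by positivity
  have hα_nonneg : 0 ≤ α := by
    apply div_nonneg _ hN0.le; linarith
  have hpα1 : p + α = 1 := by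
    rw [hp_def, hα_def, ← add_div,
      show (1:ℝ) + ((N:ℝ) - 1) = (N:ℝ) by ring]
    exact div_self hN0.ne'
  have hp1 : p - 1 = -α := by linarith
  refine ⟨(N:ℝ)/c, ?_, ?_⟩
  · rw [lt_div_iff₀ hc0]; linarith
  intro R hR
  have hmemR : R ∈ Set.Ici (0:ℝ) := le_of_lt hR
  have hVpos : ∀ t : ℝ, 0 < t → 0 < V t := by
    intro t ht
    have := hV_mono Set.self_mem_Ici (le_of_lt ht) ht
    rwa [hV0] at this
  have hVnonneg : ∀ t : ℝ, 0 ≤ t → 0 ≤ V t := by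
    intro t ht
    rcases eq_or_lt_of_le ht with h'|h'
    · rw [← h', hV0]
    · exact (hVpos t h').le
  have hVR_pos : 0 < V R := hVpos R hR
  have hA_pos : 0 < h (V R) := hh_pos _ hVR_pos
  have hVcont : ContinuousOn V (Set.Icc 0 R) := fun t ht =>
    ((hV_deriv t ht.1).continuousAt).continuousWithinAt
  constructor
  · -- lower bound
    set K : ℝ := c / N * h (V R) / (V R) ^ α with hK_def
    have hSα_pos : 0 < (V R) ^ α := Real.rpow_pos_of_pos hVR_pos α
    have hK_pos : 0 < K := by positivity
    -- φ := V ^ p - K * t ; derivative φ'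
    have hφderiv : ∀ x ∈ Set.Ioo (0:ℝ) R,
        HasDerivAt (fun t => V t ^ p - K * t) (V' x * p * V x ^ (p - 1) - K) x := by
      intro x hx
      have h1 : HasDerivAt (fun t => V t ^ p) (V' x * p * V x ^ (p - 1)) x :=
        (hV_deriv x hx.1.le).rpow_const (Or.inl (hVpos x hx.1).ne')
      have h2 : HasDerivAt (fun t => K * t) K x := by
        simpa using (hasDerivAt_id x).const_mul K
      exact h1.sub h2
    have hφcont : ContinuousOn (fun t => V t ^ p - K * t) (Set.Icc 0 R) := by
      apply ContinuousOn.sub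
      · exact hVcont.rpow_const (fun t ht => Or.inr hp_pos.le)
      · exact (continuous_const.mul continuous_id).continuousOn
    obtain ⟨ξ, hξ, hslope⟩ := exists_hasDerivAt_eq_slope
      (fun t => V t ^ p - K * t) (fun x => V' x * p * V x ^ (p - 1) - K) hR hφcont hφderiv
    -- show derivative nonneg at ξ
    have hphi' : 0 ≤ V' ξ * p * V ξ ^ (p - 1) - K := by
      have hs_pos : 0 < V ξ := hVpos ξ hξ.1
      have hsS : V ξ ≤ V R := (hV_mono (le_of_lt hξ.1) hmemR hξ.2).le
      have ha_pos : 0 < h (V ξ) := hh_pos _ hs_pos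
      have hω := hω_mono (Set.mem_Ioi.mpr hs_pos) (Set.mem_Ioi.mpr hVR_pos) hsS
      -- hω : V ξ ^ α / h (V ξ) ≤ V R ^ α / h (V R)
      have hsα_pos : 0 < (V ξ) ^ α := Real.rpow_pos_of_pos hs_pos α
      have key : h (V R) / (V R) ^ α ≤ h (V ξ) / (V ξ) ^ α := by
        rw [div_le_div_iff₀ hSα_pos hsα_pos]
        rw [div_le_div_iff₀ ha_pos hA_pos] at hω
        linarith
      have hV'x : c * h (V ξ) ≤ V' ξ := hV'_lb ξ hξ.1
      have e1 : (V ξ) ^ (p - 1) = ((V ξ) ^ α)⁻¹ := by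
        rw [hp1, Real.rpow_neg hs_pos.le]
      have step : K ≤ c * h (V ξ) * p * V ξ ^ (p - 1) := by
        rw [e1]
        have e2 : K = c * p * (h (V R) / V R ^ α) := by
          rw [hK_def, hp_def]; ring
        have e3 : c * h (V ξ) * p * (V ξ ^ α)⁻¹ = c * p * (h (V ξ) / V ξ ^ α) := by
          rw [div_eq_mul_inv]; ring
        rw [e2, e3]
        exact mul_le_mul_of_nonneg_left key (by positivity)
      have mono1 : c * h (V ξ) * p * V ξ ^ (p - 1) ≤ V' ξ * p * V ξ ^ (p - 1) := by
        have : (0:ℝ) ≤ p * V ξ ^ (p - 1) := by positivity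
        nlinarith
      linarith
    -- conclude
    rw [hslope] at hphi'
    rw [hV0, Real.zero_rpow hp_pos.ne', mul_zero, sub_zero, sub_zero] at hphi'
    have hKR : K * R ≤ V R ^ p := by
      have h6 := mul_nonneg hphi' (by linarith : (0:ℝ) ≤ R - 0)
      rw [div_mul_cancel₀ _ (by linarith : R - 0 ≠ 0)] at h6
      linarith
    have : c / N * h (V R) * R ≤ V R := by
      have e2 : K * R * (V R) ^ α ≤ V R ^ p * (V R) ^ α := by
        exact mul_le_mul_of_nonneg_right hKR hSα_pos.le
      rw [← Real.rpow_add hVR_pos, hpα1, Real.rpow_one] at e2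
      have e3 : K * (V R) ^ α = c / N * h (V R) := by
        rw [hK_def, div_mul_cancel₀ _ hSα_pos.ne']
      nlinarith
    rw [show ((N:ℝ)/c)⁻¹ = c / N by rw [inv_div], le_div_iff₀ hA_pos]
    linarith
  · -- upper bound
    obtain ⟨ξ, hξ, hslope⟩ := exists_hasDerivAt_eq_slope V V' hR hVcont
      (fun x hx => hV_deriv x hx.1.le)
    have hVξ : V ξ ≤ V R := (hV_mono (le_of_lt hξ.1) hmemR hξ.2).le
    have h1 : V' ξ ≤ c⁻¹ * h (V R) := by
      refine le_trans (hV'_ub ξ hξ.1) ?_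
      have := hh_mono (Set.mem_Ici.mpr (hVnonneg ξ hξ.1.le)) (Set.mem_Ici.mpr hVR_pos.le) hVξ
      have hci : 0 < c⁻¹ := by positivity
      nlinarith
    have hVReq : V R = V' ξ * R := by
      rw [hslope, hV0, sub_zero, sub_zero, div_mul_cancel₀ _ hR.ne']
    rw [div_le_iff₀ hA_pos]
    calc V R = V' ξ * R := hVReq
      _ ≤ c⁻¹ * h (V R) * R := by nlinarith
      _ ≤ (N:ℝ)/c * R * h (V R) := by
          have h7 : c⁻¹ ≤ (N:ℝ)/c := by
            rw [inv_eq_one_div, div_le_div_iff₀ hc0 hc0]; nlinarith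
          nlinarith [mul_le_mul_of_nonneg_right h7 (mul_nonneg hR.le hA_pos.le)]
end

section
/- Let N ≥ 2 be an integer, 0 < α1 < α2 < p < N, and 0 < c < 1. Let V : [0,∞) → [0,∞) be a C¹ strictly increasing bijection with V(0) = 0 and inverse V^{(-1)}, satisfying ∫_0^k V^{(-1)}(t)^{-p} dt ≤ c^{-1}·k·V^{(-1)}(k)^{-p} for all k > 0 and V'(R) ≤ N·V(R)/R for all R > 0. Let ρ : [0,∞) → (0,∞) be continuous and nonincreasing such that s ↦ ρ(s)·s^{α1} is nonincreasing on (1,∞) and s ↦ ρ(s)·s^{α2} is nondecreasing on (1,∞). Assume vol_ρ(R) = ρ(R)·V(R) is a strictly increasing bijection of [0,∞) onto itself with inverse R_ρ, and that there exist constants C1 > C0 > 0 with C0·s^{1/N} ≤ R_ρ(s) ≤ C1·s^{1/N} whenever R_ρ(s) ≤ 1. Define W(r) = ρ(R_ρ(r))·R_ρ(r)^p·r^{−(p−α2)/(N−α1)} for r > 0. Then there exists a constant γ > 1 such that W(r) ≤ γ·W(s) for all s > r > 0. -/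
open MeasureTheory

private lemma monoOn_Ici_of_Ioi (f : ℝ → ℝ) (hm : MonotoneOn f (Set.Ioi (1:ℝ)))
    (hc : ContinuousWithinAt f (Set.Ici 1) 1) : MonotoneOn f (Set.Ici (1:ℝ)) := by
  intro a ha b hb hab
  rcases eq_or_lt_of_le (show (1:ℝ) ≤ a from ha) with h1a | h1a
  · rcases eq_or_lt_of_le hab with h | h
    · rw [h]
    · subst h1a
      have hb1 : (1:ℝ) < b := h
      have ht : Filter.Tendsto f (nhdsWithin 1 (Set.Ioi 1)) (nhds (f 1)) :=
        hc.mono_left (nhdsWithin_mono 1 Set.Ioi_subset_Ici_self)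
      refine le_of_tendsto ht ?_
      filter_upwards [Ioo_mem_nhdsGT_of_mem (Set.left_mem_Ico.2 hb1)] with t htm
      exact hm htm.1 hb1 htm.2.le
  · exact hm h1a (lt_of_lt_of_le h1a hab) hab

private lemma antiOn_Ici_of_Ioi (f : ℝ → ℝ) (hm : AntitoneOn f (Set.Ioi (1:ℝ)))
    (hc : ContinuousWithinAt f (Set.Ici 1) 1) : AntitoneOn f (Set.Ici (1:ℝ)) := by
  have h := monoOn_Ici_of_Ioi (fun x => -f x)
    (fun a ha b hb hab => neg_le_neg (hm ha hb hab)) hc.neg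
  intro a ha b hb hab
  have := h ha hb hab
  simpa using this

private lemma Vratio (Nr : ℝ) (V V' : ℝ → ℝ)
    (hV_deriv : ∀ R : ℝ, 0 ≤ R → HasDerivAt V (V' R) R)
    (hV'_ub : ∀ R : ℝ, 0 < R → V' R ≤ Nr * V R / R) :
    ∀ R S : ℝ, 0 < R → R ≤ S → V S * R ^ Nr ≤ V R * S ^ Nr := by
  have key : AntitoneOn (fun x => V x / x ^ Nr) (Set.Ioi (0:ℝ)) := by
    have hder : ∀ x ∈ Set.Ioi (0:ℝ), HasDerivAt (fun x => V x / x ^ Nr)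
        ((V' x * x ^ Nr - V x * (Nr * x ^ (Nr - 1))) / (x ^ Nr) ^ 2) x := by
      intro x hx
      have hx0 : (0:ℝ) < x := hx
      exact (hV_deriv x hx0.le).div (Real.hasDerivAt_rpow_const (Or.inl hx0.ne'))
        (Real.rpow_pos_of_pos hx0 Nr).ne'
    apply antitoneOn_of_deriv_nonpos (convex_Ioi 0)
    · intro x hx
      exact ((hder x hx).continuousAt).continuousWithinAt
    · intro x hx
      rw [interior_Ioi] at hx
      exact (hder x hx).differentiableAt.differentiableWithinAt
    · intro x hx
      rw [interior_Ioi] at hx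
      have hx0 : (0:ℝ) < x := hx
      rw [(hder x hx).deriv]
      apply div_nonpos_of_nonpos_of_nonneg _ (sq_nonneg _)
      have h1 : V' x * x ^ Nr ≤ (Nr * V x / x) * x ^ Nr :=
        mul_le_mul_of_nonneg_right (hV'_ub x hx0) (Real.rpow_pos_of_pos hx0 Nr).le
      have h2 : (Nr * V x / x) * x ^ Nr = V x * (Nr * x ^ (Nr - 1)) := by
        rw [Real.rpow_sub hx0, Real.rpow_one]
        field_simp
      linarith [h1, h2 ▸ h1]
  intro R S hR hRS
  have hS : (0:ℝ) < S := lt_of_lt_of_le hR hRS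
  have := key (Set.mem_Ioi.2 hR) (Set.mem_Ioi.2 hS) hRS
  rw [div_le_div_iff₀ (Real.rpow_pos_of_pos hS Nr) (Real.rpow_pos_of_pos hR Nr)] at this
  linarith

private lemma volstep (Nr α1 ax ay vx vy x y r s : ℝ)
    (hx : 0 < x) (hy : 0 < y) (hr : r = ax * vx) (hs : s = ay * vy)
    (h1 : ay * y ^ α1 ≤ ax * x ^ α1)
    (h2 : vy * x ^ Nr ≤ vx * y ^ Nr)
    (hvy : 0 ≤ vy) (hax : 0 ≤ ax) :
    s * x ^ (Nr - α1) ≤ r * y ^ (Nr - α1) := by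
  have hpos : (0:ℝ) < x ^ α1 * y ^ α1 := by positivity
  rw [← mul_le_mul_iff_of_pos_right hpos]
  have ex : x ^ (Nr - α1) * x ^ α1 = x ^ Nr := by
    rw [← Real.rpow_add hx]; ring_nf
  have e1 : s * x ^ (Nr - α1) * (x ^ α1 * y ^ α1)
      = (ay * y ^ α1) * (vy * (x ^ (Nr - α1) * x ^ α1)) := by rw [hs]; ring
  have ey : y ^ (Nr - α1) * y ^ α1 = y ^ Nr := by
    rw [← Real.rpow_add hy]; ring_nf
  have e2 : r * y ^ (Nr - α1) * (x ^ α1 * y ^ α1)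
      = (ax * x ^ α1) * (vx * (y ^ (Nr - α1) * y ^ α1)) := by rw [hr]; ring
  rw [e1, e2, ex, ey]
  exact mul_le_mul h1 h2 (by positivity) (by positivity)

private lemma case1 (Nr p α1 α2 a b x y r s : ℝ)
    (hα2p : α2 < p) (hα1N : α1 < Nr)
    (hx : 0 < x) (hxy : x ≤ y) (ha : 0 < a) (hr : 0 < r) (hs : 0 < s)
    (hα2h : a * x ^ α2 ≤ b * y ^ α2)
    (hV : s * x ^ (Nr - α1) ≤ r * y ^ (Nr - α1)) :
    a * x ^ p * r ^ (-((p - α2) / (Nr - α1))) ≤ b * y ^ p * s ^ (-((p - α2) / (Nr - α1))) := by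
  have hy : 0 < y := lt_of_lt_of_le hx hxy
  set β : ℝ := (p - α2) / (Nr - α1) with hβ
  have hNα : (0:ℝ) < Nr - α1 := by linarith
  have hβpos : 0 < β := div_pos (by linarith) hNα
  have hA : s ^ β * x ^ (p - α2) ≤ r ^ β * y ^ (p - α2) := by
    have h1 : (s * x ^ (Nr - α1)) ^ β ≤ (r * y ^ (Nr - α1)) ^ β :=
      Real.rpow_le_rpow (by positivity) hV hβpos.le
    have e1 : (Nr - α1) * β = p - α2 := by
      rw [hβ]; field_simp
    rw [Real.mul_rpow hs.le (by positivity), Real.mul_rpow hr.le (by positivity),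
      ← Real.rpow_mul hx.le, ← Real.rpow_mul hy.le, e1] at h1
    exact h1
  rw [Real.rpow_neg hr.le, Real.rpow_neg hs.le, ← div_eq_mul_inv, ← div_eq_mul_inv,
    div_le_div_iff₀ (Real.rpow_pos_of_pos hr _) (Real.rpow_pos_of_pos hs _)]
  have ex : x ^ p = x ^ α2 * x ^ (p - α2) := by
    rw [← Real.rpow_add hx]; ring_nf
  have ey : y ^ p = y ^ α2 * y ^ (p - α2) := by
    rw [← Real.rpow_add hy]; ring_nf
  rw [ex, ey]
  have t1 : a * x ^ α2 * (x ^ (p - α2) * s ^ β) ≤ a * x ^ α2 * (y ^ (p - α2) * r ^ β) := by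
    apply mul_le_mul_of_nonneg_left _ (by positivity)
    linarith [hA]
  have t2 : a * x ^ α2 * (y ^ (p - α2) * r ^ β) ≤ b * y ^ α2 * (y ^ (p - α2) * r ^ β) :=
    mul_le_mul_of_nonneg_right hα2h (by positivity)
  calc a * (x ^ α2 * x ^ (p - α2)) * s ^ β
      = a * x ^ α2 * (x ^ (p - α2) * s ^ β) := by ring
    _ ≤ a * x ^ α2 * (y ^ (p - α2) * r ^ β) := t1
    _ ≤ b * y ^ α2 * (y ^ (p - α2) * r ^ β) := t2
    _ = b * (y ^ α2 * y ^ (p - α2)) * r ^ β := by ring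

private lemma case2 (Nr p α1 α2 a b x y r s C0 C1 ρ0 ρ1 : ℝ)
    (hα1 : 0 < α1) (hα12 : α1 < α2) (hα2p : α2 < p) (hpN : p < Nr)
    (hr : 0 < r) (hrs : r ≤ s)
    (hC0 : 0 < C0) (hC1 : 0 < C1)
    (hρ0 : 0 < ρ0) (hρ1 : 0 < ρ1) (hb : 0 < b)
    (haub : a ≤ ρ0) (hblb : ρ1 ≤ b)
    (hxub : x ≤ C1 * r ^ (Nr⁻¹)) (hylb : C0 * s ^ (Nr⁻¹) ≤ y) (hxnn : 0 ≤ x) :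
    a * x ^ p * r ^ (-((p - α2) / (Nr - α1))) ≤
      (ρ0 / ρ1) * (C1 / C0) ^ p * (b * y ^ p * s ^ (-((p - α2) / (Nr - α1)))) := by
  have hs : 0 < s := lt_of_lt_of_le hr hrs
  set β : ℝ := (p - α2) / (Nr - α1) with hβ
  have hNα : (0:ℝ) < Nr - α1 := by linarith
  have hNr : (0:ℝ) < Nr := by linarith
  have hβpos : 0 < β := div_pos (by linarith) hNα
  have hβub : β ≤ p / Nr := by
    rw [hβ, div_le_div_iff₀ hNα hNr]
    nlinarith
  have hp : 0 < p := by linarith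
  have l1 : a * x ^ p * r ^ (-β) ≤ ρ0 * C1 ^ p * r ^ (Nr⁻¹ * p - β) := by
    have hxp : x ^ p ≤ (C1 * r ^ (Nr⁻¹)) ^ p :=
      Real.rpow_le_rpow hxnn hxub hp.le
    have hax : a * x ^ p ≤ ρ0 * (C1 * r ^ (Nr⁻¹)) ^ p := by
      apply mul_le_mul haub hxp (by positivity) hρ0.le
    have e : (C1 * r ^ (Nr⁻¹)) ^ p * r ^ (-β) = C1 ^ p * r ^ (Nr⁻¹ * p - β) := by
      rw [Real.mul_rpow hC1.le (by positivity), ← Real.rpow_mul hr.le,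
        mul_assoc, ← Real.rpow_add hr]
      ring_nf
    calc a * x ^ p * r ^ (-β) ≤ ρ0 * (C1 * r ^ (Nr⁻¹)) ^ p * r ^ (-β) := by
          apply mul_le_mul_of_nonneg_right hax (by positivity)
      _ = ρ0 * C1 ^ p * r ^ (Nr⁻¹ * p - β) := by rw [mul_assoc, e, ← mul_assoc]
  have l2 : r ^ (Nr⁻¹ * p - β) ≤ s ^ (Nr⁻¹ * p - β) := by
    apply Real.rpow_le_rpow hr.le hrs
    have h : Nr⁻¹ * p = p / Nr := by ring
    rw [h]; linarith
  have l3 : ρ1 * C0 ^ p * s ^ (Nr⁻¹ * p - β) ≤ b * y ^ p * s ^ (-β) := by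
    have hyp : (C0 * s ^ (Nr⁻¹)) ^ p ≤ y ^ p :=
      Real.rpow_le_rpow (by positivity) hylb hp.le
    have h1 : ρ1 * (C0 * s ^ (Nr⁻¹)) ^ p ≤ b * y ^ p :=
      mul_le_mul hblb hyp (by positivity) hb.le
    have e : (C0 * s ^ (Nr⁻¹)) ^ p * s ^ (-β) = C0 ^ p * s ^ (Nr⁻¹ * p - β) := by
      rw [Real.mul_rpow hC0.le (by positivity), ← Real.rpow_mul hs.le,
        mul_assoc, ← Real.rpow_add hs]
      ring_nf
    calc ρ1 * C0 ^ p * s ^ (Nr⁻¹ * p - β)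
        = ρ1 * ((C0 * s ^ (Nr⁻¹)) ^ p * s ^ (-β)) := by rw [e]; ring
      _ = ρ1 * (C0 * s ^ (Nr⁻¹)) ^ p * s ^ (-β) := by ring
      _ ≤ b * y ^ p * s ^ (-β) := by
          apply mul_le_mul_of_nonneg_right h1 (by positivity)
  have key : a * x ^ p * r ^ (-β) ≤ ρ0 * C1 ^ p * s ^ (Nr⁻¹ * p - β) := by
    calc a * x ^ p * r ^ (-β) ≤ ρ0 * C1 ^ p * r ^ (Nr⁻¹ * p - β) := l1
      _ ≤ ρ0 * C1 ^ p * s ^ (Nr⁻¹ * p - β) := by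
          apply mul_le_mul_of_nonneg_left l2 (by positivity)
  have efin : (ρ0 / ρ1) * (C1 / C0) ^ p * (ρ1 * C0 ^ p * s ^ (Nr⁻¹ * p - β))
      = ρ0 * C1 ^ p * s ^ (Nr⁻¹ * p - β) := by
    rw [Real.div_rpow hC1.le hC0.le]
    field_simp
  calc a * x ^ p * r ^ (-β) ≤ ρ0 * C1 ^ p * s ^ (Nr⁻¹ * p - β) := key
    _ = (ρ0 / ρ1) * (C1 / C0) ^ p * (ρ1 * C0 ^ p * s ^ (Nr⁻¹ * p - β)) := efin.symm
    _ ≤ (ρ0 / ρ1) * (C1 / C0) ^ p * (b * y ^ p * s ^ (-β)) := by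
        apply mul_le_mul_of_nonneg_left l3 (by positivity)

/-- Under the geometric and density hypotheses (non-parabolicity,
`V' R ≤ N V R / R`, `ρ s s^{α1}` nonincreasing and `ρ s s^{α2}` nondecreasing on `(1,∞)`,
`vol_ρ = ρ · V` an increasing bijection with inverse `Rρ` comparable to `s^{1/N}` near
zero), the function `W r = ρ (Rρ r) * Rρ r ^ p * r ^ (-(p-α2)/(N-α1))` is almost
nondecreasing: there is `γ > 1` with `W r ≤ γ * W s` for all `s > r > 0`. -/
theorem W_almost_monotone
    (N : ℕ) (hN : 2 ≤ N) (p α1 α2 c : ℝ)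
    (hα1 : 0 < α1) (hα12 : α1 < α2) (hα2p : α2 < p) (hpN : p < N)
    (hc0 : 0 < c) (hc1 : c < 1)
    (V V' Vinv : ℝ → ℝ)
    (hV_deriv : ∀ R : ℝ, 0 ≤ R → HasDerivAt V (V' R) R)
    (hV'_cont : ContinuousOn V' (Set.Ici 0))
    (hV_mono : StrictMonoOn V (Set.Ici 0))
    (hV0 : V 0 = 0)
    (hV_surj : ∀ y : ℝ, 0 ≤ y → ∃ x : ℝ, 0 ≤ x ∧ V x = y)
    (hVinv_left : ∀ x : ℝ, 0 ≤ x → Vinv (V x) = x)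
    (hVinv_right : ∀ y : ℝ, 0 ≤ y → 0 ≤ Vinv y ∧ V (Vinv y) = y)
    (h_phyp : ∀ k : ℝ, 0 < k →
      (∫ t in (0:ℝ)..k, Vinv t ^ (-p)) ≤ c⁻¹ * k * Vinv k ^ (-p))
    (hV'_ub : ∀ R : ℝ, 0 < R → V' R ≤ (N : ℝ) * V R / R)
    (ρ : ℝ → ℝ)
    (hρ_pos : ∀ s : ℝ, 0 ≤ s → 0 < ρ s)
    (hρ_cont : ContinuousOn ρ (Set.Ici 0))
    (hρ_anti : AntitoneOn ρ (Set.Ici 0))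
    (hρ_dec : AntitoneOn (fun s : ℝ => ρ s * s ^ α1) (Set.Ioi 1))
    (hρ_inc : MonotoneOn (fun s : ℝ => ρ s * s ^ α2) (Set.Ioi 1))
    (Rρ : ℝ → ℝ)
    (hvol_mono : StrictMonoOn (fun R : ℝ => ρ R * V R) (Set.Ici 0))
    (hvol_surj : ∀ y : ℝ, 0 ≤ y → ∃ R : ℝ, 0 ≤ R ∧ ρ R * V R = y)
    (hRρ_left : ∀ R : ℝ, 0 ≤ R → Rρ (ρ R * V R) = R)
    (hRρ_right : ∀ y : ℝ, 0 ≤ y → 0 ≤ Rρ y ∧ ρ (Rρ y) * V (Rρ y) = y)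
    (C0 C1 : ℝ) (hC0 : 0 < C0) (hC01 : C0 < C1)
    (hRρ_small : ∀ s : ℝ, 0 < s → Rρ s ≤ 1 →
      C0 * s ^ ((N : ℝ)⁻¹) ≤ Rρ s ∧ Rρ s ≤ C1 * s ^ ((N : ℝ)⁻¹)) :
    ∃ γ : ℝ, 1 < γ ∧
      ∀ r s : ℝ, 0 < r → r < s →
        ρ (Rρ r) * Rρ r ^ p * r ^ (-((p - α2) / ((N : ℝ) - α1))) ≤
          γ * (ρ (Rρ s) * Rρ s ^ p * s ^ (-((p - α2) / ((N : ℝ) - α1)))) := by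
  have hNr2 : (2:ℝ) ≤ (N:ℝ) := by exact_mod_cast hN
  have hρ0 : 0 < ρ 0 := hρ_pos 0 le_rfl
  have hρ1 : 0 < ρ 1 := hρ_pos 1 zero_le_one
  have hC1 : 0 < C1 := hC0.trans hC01
  have hα1N : α1 < (N:ℝ) := by linarith
  have hVpos : ∀ x : ℝ, 0 < x → 0 < V x := by
    intro x hx
    have := hV_mono Set.self_mem_Ici (Set.mem_Ici.2 hx.le) hx
    simpa [hV0] using this
  have hVr := Vratio (N:ℝ) V V' hV_deriv hV'_ub
  -- facts about Rρ
  have hRρ_pos : ∀ t : ℝ, 0 < t → 0 < Rρ t := by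
    intro t ht
    obtain ⟨h0, he⟩ := hRρ_right t ht.le
    rcases h0.lt_or_eq with h | h
    · exact h
    · exfalso
      rw [← h, hV0, mul_zero] at he
      linarith
  have hRρ_mono : ∀ t u : ℝ, 0 < t → t ≤ u → Rρ t ≤ Rρ u := by
    intro t u ht htu
    have hu : 0 < u := lt_of_lt_of_le ht htu
    by_contra hcon
    push_neg at hcon
    have := hvol_mono (Set.mem_Ici.2 (hRρ_right u hu.le).1)
      (Set.mem_Ici.2 (hRρ_right t ht.le).1) hcon
    simp only [(hRρ_right t ht.le).2, (hRρ_right u hu.le).2] at this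
    linarith
  -- extended monotonicities on Ici 1
  have hcontρ1 : ContinuousWithinAt ρ (Set.Ici 1) 1 :=
    (hρ_cont 1 (by norm_num)).mono (Set.Ici_subset_Ici.2 zero_le_one)
  have hrpow_cont : ∀ α : ℝ, ContinuousWithinAt (fun s : ℝ => s ^ α) (Set.Ici 1) 1 :=
    fun α => (Real.continuousAt_rpow_const 1 α (Or.inl one_ne_zero)).continuousWithinAt
  have hinc' : MonotoneOn (fun s : ℝ => ρ s * s ^ α2) (Set.Ici 1) :=
    monoOn_Ici_of_Ioi _ hρ_inc (hcontρ1.mul (hrpow_cont α2))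
  have hdec' : AntitoneOn (fun s : ℝ => ρ s * s ^ α1) (Set.Ici 1) :=
    antiOn_Ici_of_Ioi _ hρ_dec (hcontρ1.mul (hrpow_cont α1))
  set K : ℝ := (ρ 0 / ρ 1) * (C1 / C0) ^ p with hK
  have hKpos : 0 < K := by positivity
  set γ : ℝ := max 2 K with hγ
  have hγ1 : (1:ℝ) < γ := lt_of_lt_of_le one_lt_two (le_max_left _ _)
  refine ⟨γ, hγ1, ?_⟩
  intro r s hr hrs
  have hs : 0 < s := hr.trans hrs
  obtain ⟨hxnn, hxeq⟩ := hRρ_right r hr.le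
  obtain ⟨hynn, hyeq⟩ := hRρ_right s hs.le
  have hx : 0 < Rρ r := hRρ_pos r hr
  have hy : 0 < Rρ s := hRρ_pos s hs
  have hxy : Rρ r ≤ Rρ s := hRρ_mono r s hr hrs.le
  have hρx : 0 < ρ (Rρ r) := hρ_pos _ hx.le
  have hρy : 0 < ρ (Rρ s) := hρ_pos _ hy.le
  have hWs_pos : 0 < ρ (Rρ s) * Rρ s ^ p * s ^ (-((p - α2) / ((N:ℝ) - α1))) := by positivity
  -- case analysis
  by_cases hy1 : Rρ s ≤ 1
  · -- both small: case2 with coefficient K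
    have hx1 : Rρ r ≤ 1 := le_trans hxy hy1
    obtain ⟨_, hxub⟩ := hRρ_small r hr hx1
    obtain ⟨hylb, _⟩ := hRρ_small s hs hy1
    have h2 := case2 (N:ℝ) p α1 α2 (ρ (Rρ r)) (ρ (Rρ s)) (Rρ r) (Rρ s) r s C0 C1 (ρ 0) (ρ 1)
      hα1 hα12 hα2p hpN hr hrs.le hC0 hC1 hρ0 hρ1 hρy
      (hρ_anti Set.self_mem_Ici (Set.mem_Ici.2 hx.le) hx.le)
      (hρ_anti (Set.mem_Ici.2 hy.le) (Set.mem_Ici.2 zero_le_one) hy1)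
      hxub hylb hx.le
    calc ρ (Rρ r) * Rρ r ^ p * r ^ (-((p - α2) / ((N:ℝ) - α1)))
        ≤ K * (ρ (Rρ s) * Rρ s ^ p * s ^ (-((p - α2) / ((N:ℝ) - α1)))) := h2
      _ ≤ γ * (ρ (Rρ s) * Rρ s ^ p * s ^ (-((p - α2) / ((N:ℝ) - α1)))) :=
          mul_le_mul_of_nonneg_right (le_max_right _ _) hWs_pos.le
  · push_neg at hy1
    by_cases hx1 : 1 ≤ Rρ r
    · -- both large: case1 with coefficient 1
      have hα2h : ρ (Rρ r) * Rρ r ^ α2 ≤ ρ (Rρ s) * Rρ s ^ α2 :=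
        hinc' (Set.mem_Ici.2 hx1) (Set.mem_Ici.2 (le_trans hx1 hxy)) hxy
      have hα1h : ρ (Rρ s) * Rρ s ^ α1 ≤ ρ (Rρ r) * Rρ r ^ α1 :=
        hdec' (Set.mem_Ici.2 hx1) (Set.mem_Ici.2 (le_trans hx1 hxy)) hxy
      have hV2 := hVr (Rρ r) (Rρ s) hx hxy
      have hVstep := volstep (N:ℝ) α1 (ρ (Rρ r)) (ρ (Rρ s)) (V (Rρ r)) (V (Rρ s))
        (Rρ r) (Rρ s) r s hx hy hxeq.symm hyeq.symm hα1h hV2 (hVpos _ hy).le hρx.le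
      have h1 := case1 (N:ℝ) p α1 α2 (ρ (Rρ r)) (ρ (Rρ s)) (Rρ r) (Rρ s) r s
        hα2p hα1N hx hxy hρx hr hs hα2h hVstep
      calc ρ (Rρ r) * Rρ r ^ p * r ^ (-((p - α2) / ((N:ℝ) - α1)))
          ≤ ρ (Rρ s) * Rρ s ^ p * s ^ (-((p - α2) / ((N:ℝ) - α1))) := h1
        _ ≤ γ * (ρ (Rρ s) * Rρ s ^ p * s ^ (-((p - α2) / ((N:ℝ) - α1)))) :=
            le_mul_of_one_le_left hWs_pos.le hγ1.le
    · push_neg at hx1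
      -- mixed: go through r1 = vol 1
      set r1 : ℝ := ρ 1 * V 1 with hr1def
      have hV1pos : 0 < V 1 := hVpos 1 one_pos
      have hr1pos : 0 < r1 := by positivity
      have hRr1 : Rρ r1 = 1 := hRρ_left 1 zero_le_one
      have hvolmono := hvol_mono.monotoneOn
      have hrr1 : r ≤ r1 := by
        have := hvolmono (Set.mem_Ici.2 hx.le) (Set.mem_Ici.2 zero_le_one) hx1.le
        simpa [hxeq] using this
      have hr1s : r1 ≤ s := by
        have := hvolmono (Set.mem_Ici.2 zero_le_one) (Set.mem_Ici.2 hy.le) hy1.le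
        simpa [hyeq] using this
      -- step 1 : W r ≤ K * (ρ 1 * 1 ^ p * r1 ^ (-β))
      obtain ⟨_, hxub⟩ := hRρ_small r hr hx1.le
      obtain ⟨hylb1, _⟩ := hRρ_small r1 hr1pos (le_of_eq hRr1)
      rw [hRr1] at hylb1
      have step1 := case2 (N:ℝ) p α1 α2 (ρ (Rρ r)) (ρ 1) (Rρ r) 1 r r1 C0 C1 (ρ 0) (ρ 1)
        hα1 hα12 hα2p hpN hr hrr1 hC0 hC1 hρ0 hρ1 hρ1
        (hρ_anti Set.self_mem_Ici (Set.mem_Ici.2 hx.le) hx.le) le_rfl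
        hxub hylb1 hx.le
      -- step 2 : ρ 1 * 1 ^ p * r1 ^ (-β) ≤ W s
      have hα2h : ρ 1 * (1:ℝ) ^ α2 ≤ ρ (Rρ s) * Rρ s ^ α2 :=
        hinc' Set.self_mem_Ici (Set.mem_Ici.2 hy1.le) hy1.le
      have hα1h : ρ (Rρ s) * Rρ s ^ α1 ≤ ρ 1 * (1:ℝ) ^ α1 :=
        hdec' Set.self_mem_Ici (Set.mem_Ici.2 hy1.le) hy1.le
      have hV2 := hVr 1 (Rρ s) one_pos hy1.le
      have hVstep := volstep (N:ℝ) α1 (ρ 1) (ρ (Rρ s)) (V 1) (V (Rρ s))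
        1 (Rρ s) r1 s one_pos hy hr1def hyeq.symm hα1h hV2 (hVpos _ hy).le hρ1.le
      have step2 := case1 (N:ℝ) p α1 α2 (ρ 1) (ρ (Rρ s)) 1 (Rρ s) r1 s
        hα2p hα1N one_pos hy1.le hρ1 hr1pos hs hα2h hVstep
      calc ρ (Rρ r) * Rρ r ^ p * r ^ (-((p - α2) / ((N:ℝ) - α1)))
          ≤ K * (ρ 1 * (1:ℝ) ^ p * r1 ^ (-((p - α2) / ((N:ℝ) - α1)))) := step1
        _ ≤ K * (ρ (Rρ s) * Rρ s ^ p * s ^ (-((p - α2) / ((N:ℝ) - α1)))) :=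
            mul_le_mul_of_nonneg_left step2 hKpos.le
        _ ≤ γ * (ρ (Rρ s) * Rρ s ^ p * s ^ (-((p - α2) / ((N:ℝ) - α1)))) :=
            mul_le_mul_of_nonneg_right (le_max_right _ _) hWs_pos.le
end

section
/- Let N ≥ 2 be an integer, 0 < α1 < α2 < p < N, and 0 < c < 1. Let V : [0,∞) → [0,∞) be a C¹ strictly increasing bijection with V(0) = 0 and inverse V^{(-1)}, satisfying ∫_0^k V^{(-1)}(t)^{-p} dt ≤ c^{-1}·k·V^{(-1)}(k)^{-p} for all k > 0 and V'(R) ≤ N·V(R)/R for all R > 0. Let ρ : [0,∞) → (0,∞) be continuous and nonincreasing such that s ↦ ρ(s)·s^{α1} is nonincreasing on (1,∞) and s ↦ ρ(s)·s^{α2} is nondecreasing on (1,∞). Assume vol_ρ(R) = ρ(R)·V(R) is a strictly increasing bijection of [0,∞) onto itself with inverse R_ρ, and that there exist constants C1 > C0 > 0 with C0·s^{1/N} ≤ R_ρ(s) ≤ C1·s^{1/N} whenever R_ρ(s) ≤ 1. Define W(r) = ρ(R_ρ(r))·R_ρ(r)^p·r^{−(p−α2)/(N−α1)} for r > 0, and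 set d = (p−α1)/(p−α2) − (p−α2)/(N−α1). Then d > 0 and there exists a constant γ1 > 0 such that W(λ·r) ≤ γ1·λ^d·W(r) for all λ ≥ 1 and r > 0. -/
open MeasureTheory

section Aux

private lemma my_monotoneOn_Ici_one_of_Ioi (g : ℝ → ℝ) (hc : ContinuousOn g (Set.Ici 1))
    (h : MonotoneOn g (Set.Ioi 1)) : MonotoneOn g (Set.Ici 1) := by
  intro a ha b hb hab
  rcases eq_or_lt_of_le (Set.mem_Ici.1 ha) with h1 | h1
  · rcases eq_or_lt_of_le hab with rfl | hab'
    · exact le_refl _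
    have hb1 : (1:ℝ) < b := by rw [h1]; exact hab'
    have ht : Filter.Tendsto g (nhdsWithin 1 (Set.Ioi 1)) (nhds (g 1)) :=
      (hc 1 Set.self_mem_Ici).mono_left (nhdsWithin_mono 1 Set.Ioi_subset_Ici_self)
    have hev : ∀ᶠ x in nhdsWithin 1 (Set.Ioi (1:ℝ)), g x ≤ g b := by
      filter_upwards [Ioo_mem_nhdsGT_of_mem (Set.left_mem_Ico.2 hb1)] with x hx
      exact h hx.1 (Set.mem_Ioi.2 hb1) hx.2.le
    rw [← h1]
    exact le_of_tendsto ht hev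
  · exact h (Set.mem_Ioi.2 h1) (Set.mem_Ioi.2 (h1.trans_le hab)) hab

private lemma my_antitoneOn_Ici_one_of_Ioi (g : ℝ → ℝ) (hc : ContinuousOn g (Set.Ici 1))
    (h : AntitoneOn g (Set.Ioi 1)) : AntitoneOn g (Set.Ici 1) := by
  intro a ha b hb hab
  rcases eq_or_lt_of_le (Set.mem_Ici.1 ha) with h1 | h1
  · rcases eq_or_lt_of_le hab with rfl | hab'
    · exact le_refl _
    have hb1 : (1:ℝ) < b := by rw [h1]; exact hab'
    have ht : Filter.Tendsto g (nhdsWithin 1 (Set.Ioi 1)) (nhds (g 1)) :=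
      (hc 1 Set.self_mem_Ici).mono_left (nhdsWithin_mono 1 Set.Ioi_subset_Ici_self)
    have hev : ∀ᶠ x in nhdsWithin 1 (Set.Ioi (1:ℝ)), g b ≤ g x := by
      filter_upwards [Ioo_mem_nhdsGT_of_mem (Set.left_mem_Ico.2 hb1)] with x hx
      exact h hx.1 (Set.mem_Ioi.2 hb1) hx.2.le
    rw [← h1]
    exact ge_of_tendsto ht hev
  · exact h (Set.mem_Ioi.2 h1) (Set.mem_Ioi.2 (h1.trans_le hab)) hab

end Aux

set_option maxHeartbeats 2000000 in
/-- Under the same hypotheses as Statement 11, with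
`W r = ρ (Rρ r) * Rρ r ^ p * r ^ (-(p-α2)/(N-α1))` and
`d = (p-α1)/(p-α2) - (p-α2)/(N-α1)`, one has `d > 0` and there is `γ1 > 0` with
`W (λ r) ≤ γ1 * λ ^ d * W r` for all `λ ≥ 1` and `r > 0`. -/
theorem W_scaling_upper_bound
    (N : ℕ) (hN : 2 ≤ N) (p α1 α2 c : ℝ)
    (hα1 : 0 < α1) (hα12 : α1 < α2) (hα2p : α2 < p) (hpN : p < N)
    (hc0 : 0 < c) (hc1 : c < 1)
    (V V' Vinv : ℝ → ℝ)
    (hV_deriv : ∀ R : ℝ, 0 ≤ R → HasDerivAt V (V' R) R)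
    (hV'_cont : ContinuousOn V' (Set.Ici 0))
    (hV_mono : StrictMonoOn V (Set.Ici 0))
    (hV0 : V 0 = 0)
    (hV_surj : ∀ y : ℝ, 0 ≤ y → ∃ x : ℝ, 0 ≤ x ∧ V x = y)
    (hVinv_left : ∀ x : ℝ, 0 ≤ x → Vinv (V x) = x)
    (hVinv_right : ∀ y : ℝ, 0 ≤ y → 0 ≤ Vinv y ∧ V (Vinv y) = y)
    (h_phyp : ∀ k : ℝ, 0 < k →
      (∫ t in (0:ℝ)..k, Vinv t ^ (-p)) ≤ c⁻¹ * k * Vinv k ^ (-p))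
    (hV'_ub : ∀ R : ℝ, 0 < R → V' R ≤ (N : ℝ) * V R / R)
    (ρ : ℝ → ℝ)
    (hρ_pos : ∀ s : ℝ, 0 ≤ s → 0 < ρ s)
    (hρ_cont : ContinuousOn ρ (Set.Ici 0))
    (hρ_anti : AntitoneOn ρ (Set.Ici 0))
    (hρ_dec : AntitoneOn (fun s : ℝ => ρ s * s ^ α1) (Set.Ioi 1))
    (hρ_inc : MonotoneOn (fun s : ℝ => ρ s * s ^ α2) (Set.Ioi 1))
    (Rρ : ℝ → ℝ)
    (hvol_mono : StrictMonoOn (fun R : ℝ => ρ R * V R) (Set.Ici 0))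
    (hvol_surj : ∀ y : ℝ, 0 ≤ y → ∃ R : ℝ, 0 ≤ R ∧ ρ R * V R = y)
    (hRρ_left : ∀ R : ℝ, 0 ≤ R → Rρ (ρ R * V R) = R)
    (hRρ_right : ∀ y : ℝ, 0 ≤ y → 0 ≤ Rρ y ∧ ρ (Rρ y) * V (Rρ y) = y)
    (C0 C1 : ℝ) (hC0 : 0 < C0) (hC01 : C0 < C1)
    (hRρ_small : ∀ s : ℝ, 0 < s → Rρ s ≤ 1 →
      C0 * s ^ ((N : ℝ)⁻¹) ≤ Rρ s ∧ Rρ s ≤ C1 * s ^ ((N : ℝ)⁻¹)) :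
    0 < (p - α1) / (p - α2) - (p - α2) / ((N : ℝ) - α1) ∧
    ∃ γ1 : ℝ, 0 < γ1 ∧
      ∀ lam r : ℝ, 1 ≤ lam → 0 < r →
        ρ (Rρ (lam * r)) * Rρ (lam * r) ^ p *
            (lam * r) ^ (-((p - α2) / ((N : ℝ) - α1))) ≤
          γ1 * lam ^ ((p - α1) / (p - α2) - (p - α2) / ((N : ℝ) - α1)) *
            (ρ (Rρ r) * Rρ r ^ p * r ^ (-((p - α2) / ((N : ℝ) - α1)))) := by
  have hN2 : (2:ℝ) ≤ (N:ℝ) := by exact_mod_cast hN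
  have hα1p : α1 < p := hα12.trans hα2p
  have hpα2 : 0 < p - α2 := by linarith
  have hpα1 : 0 < p - α1 := by linarith
  have hNα1 : 0 < (N:ℝ) - α1 := by linarith
  have hp0 : 0 < p := by linarith
  set β : ℝ := (p - α1) / (p - α2) with hβ_def
  set e : ℝ := (p - α2) / ((N:ℝ) - α1) with he_def
  have hβ1 : 1 < β := (one_lt_div hpα2).2 (by linarith)
  have he1 : e < 1 := (div_lt_one hNα1).2 (by linarith)
  have he0 : 0 < e := div_pos hpα2 hNα1
  have hd : 0 < β - e := by linarith
  refine ⟨hd, ?_⟩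
  -- basic positivity and monotonicity facts
  have hV_pos : ∀ R : ℝ, 0 < R → 0 < V R := fun R hR => by
    have := hV_mono (Set.self_mem_Ici) (Set.mem_Ici.2 hR.le) hR
    rwa [hV0] at this
  have hVinv_mono : ∀ y z : ℝ, 0 ≤ y → y ≤ z → Vinv y ≤ Vinv z := by
    intro y z hy hyz
    by_contra hcon
    push_neg at hcon
    have h1 := hV_mono (Set.mem_Ici.2 (hVinv_right z (hy.trans hyz)).1)
      (Set.mem_Ici.2 (hVinv_right y hy).1) hcon
    rw [(hVinv_right y hy).2, (hVinv_right z (hy.trans hyz)).2] at h1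
    linarith
  have hVinv_pos : ∀ y : ℝ, 0 < y → 0 < Vinv y := by
    intro y hy
    rcases lt_or_eq_of_le (hVinv_right y hy.le).1 with h | h
    · exact h
    · exfalso; have := (hVinv_right y hy.le).2; rw [← h, hV0] at this; linarith
  have hRρ_mono : ∀ y z : ℝ, 0 ≤ y → y ≤ z → Rρ y ≤ Rρ z := by
    intro y z hy hyz
    by_contra hcon
    push_neg at hcon
    have h1 := hvol_mono (Set.mem_Ici.2 (hRρ_right z (hy.trans hyz)).1)
      (Set.mem_Ici.2 (hRρ_right y hy).1) hcon
    simp only [] at h1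
    rw [(hRρ_right y hy).2, (hRρ_right z (hy.trans hyz)).2] at h1
    linarith
  have hRρ_pos : ∀ y : ℝ, 0 < y → 0 < Rρ y := by
    intro y hy
    rcases lt_or_eq_of_le (hRρ_right y hy.le).1 with h | h
    · exact h
    · exfalso
      have := (hRρ_right y hy.le).2
      rw [← h, hV0, mul_zero] at this; linarith
  have hρ1 : 0 < ρ 1 := hρ_pos 1 (by norm_num)
  have hV1 : 0 < V 1 := hV_pos 1 one_pos
  -- small-t lower bound for Vinv
  have hVinv_lb : ∀ t : ℝ, 0 < t → t ≤ V 1 →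
      C0 * (ρ 1) ^ ((N:ℝ)⁻¹) * t ^ ((N:ℝ)⁻¹) ≤ Vinv t := by
    intro t ht htV
    set y := ρ 1 * t with hy_def
    have hy : 0 < y := mul_pos hρ1 ht
    have hyle : y ≤ ρ 1 * V 1 := by
      rw [hy_def]; exact mul_le_mul_of_nonneg_left htV hρ1.le
    have hRy1 : Rρ y ≤ 1 := by
      have := hRρ_mono y (ρ 1 * V 1) hy.le hyle
      rwa [hRρ_left 1 (by norm_num)] at this
    have hlow := (hRρ_small y hy hRy1).1
    -- V (Rρ y) ≤ t
    have hρRy : ρ 1 ≤ ρ (Rρ y) := hρ_anti (Set.mem_Ici.2 (hRρ_right y hy.le).1)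
      (Set.mem_Ici.2 (by norm_num)) hRy1
    have hVRy : V (Rρ y) ≤ t := by
      have h2 := (hRρ_right y hy.le).2
      have hVpos : 0 < V (Rρ y) := hV_pos _ (hRρ_pos y hy)
      nlinarith [hρ_pos (Rρ y) (hRρ_right y hy.le).1]
    have h3 : Rρ y ≤ Vinv t := by
      have := hVinv_mono (V (Rρ y)) t (le_of_lt (hV_pos _ (hRρ_pos y hy))) hVRy
      rwa [hVinv_left _ (hRρ_right y hy.le).1] at this
    calc C0 * (ρ 1) ^ ((N:ℝ)⁻¹) * t ^ ((N:ℝ)⁻¹)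
        = C0 * y ^ ((N:ℝ)⁻¹) := by
          rw [hy_def, Real.mul_rpow hρ1.le ht.le]; ring
      _ ≤ Rρ y := hlow
      _ ≤ Vinv t := h3
  -- integrability of Vinv ^ (-p) on (0, k]
  have hmeas : Measurable fun t : ℝ => (Vinv (max t 0) ^ p)⁻¹ := by
    have hg0 : Monotone fun t : ℝ => Vinv (max t 0) := by
      intro s t hst
      exact hVinv_mono _ _ (le_max_right s 0) (max_le_max hst (le_refl 0))
    exact (((Real.continuous_rpow_const hp0.le).measurable).comp hg0.measurable).inv
  have hInt : ∀ k : ℝ, 0 < k →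
      IntervalIntegrable (fun t => Vinv t ^ (-p)) volume 0 k := by
    intro k hk
    rw [intervalIntegrable_iff_integrableOn_Ioc_of_le hk.le]
    have haeeq : (fun t : ℝ => (Vinv (max t 0) ^ p)⁻¹)
        =ᵐ[volume.restrict (Set.Ioc 0 k)] (fun t => Vinv t ^ (-p)) := by
      filter_upwards [ae_restrict_mem measurableSet_Ioc] with t ht
      rw [max_eq_left ht.1.le, Real.rpow_neg (hVinv_right t ht.1.le).1]
    refine Integrable.congr ?_ haeeq
    set B : ℝ := (C0 * (ρ 1) ^ ((N:ℝ)⁻¹)) ^ (-p) with hB_def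
    have hBpos : 0 < B :=
      Real.rpow_pos_of_pos (mul_pos hC0 (Real.rpow_pos_of_pos hρ1 _)) _
    have hexp : (-1:ℝ) < (N:ℝ)⁻¹ * (-p) := by
      have hNpos : (0:ℝ) < (N:ℝ) := by linarith
      have h1 : (N:ℝ)⁻¹ * (-p) = -(p / (N:ℝ)) := by field_simp
      have h2 : p / (N:ℝ) < 1 := (div_lt_one hNpos).2 hpN
      rw [h1]
      linarith
    have hdomInt : IntegrableOn (fun t : ℝ => B * t ^ ((N:ℝ)⁻¹ * (-p)) + 1)
        (Set.Ioc 0 k) volume := by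
      rw [← intervalIntegrable_iff_integrableOn_Ioc_of_le hk.le]
      exact ((intervalIntegral.intervalIntegrable_rpow' hexp).const_mul B).add intervalIntegrable_const
    refine hdomInt.integrable.mono' hmeas.aestronglyMeasurable ?_
    filter_upwards [ae_restrict_mem measurableSet_Ioc] with t ht
    rw [max_eq_left ht.1.le]
    have hbase : 0 ≤ Vinv t := (hVinv_right t ht.1.le).1
    have hval : 0 ≤ (Vinv t ^ p)⁻¹ := inv_nonneg.2 (Real.rpow_nonneg hbase p)
    rw [Real.norm_of_nonneg hval, ← Real.rpow_neg hbase]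
    rcases le_or_gt t (V 1) with h1 | h1
    · have hlb := hVinv_lb t ht.1 h1
      have h2 : Vinv t ^ (-p) ≤ (C0 * (ρ 1) ^ ((N:ℝ)⁻¹) * t ^ ((N:ℝ)⁻¹)) ^ (-p) :=
        Real.rpow_le_rpow_of_nonpos
          (mul_pos (mul_pos hC0 (Real.rpow_pos_of_pos hρ1 _))
            (Real.rpow_pos_of_pos ht.1 _)) hlb (by linarith)
      have h3 : (C0 * (ρ 1) ^ ((N:ℝ)⁻¹) * t ^ ((N:ℝ)⁻¹)) ^ (-p)
          = B * t ^ ((N:ℝ)⁻¹ * (-p)) := by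
        rw [Real.mul_rpow (mul_pos hC0 (Real.rpow_pos_of_pos hρ1 _)).le
          (Real.rpow_nonneg ht.1.le _), ← Real.rpow_mul ht.1.le]
      nlinarith [h2, h3]
    · have hge1 : (1:ℝ) ≤ Vinv t := by
        have := hVinv_mono (V 1) t hV1.le h1.le
        rwa [hVinv_left 1 (by norm_num)] at this
      have h2 : Vinv t ^ (-p) ≤ 1 :=
        Real.rpow_le_one_of_one_le_of_nonpos hge1 (by linarith)
      have h3 : 0 ≤ B * t ^ ((N:ℝ)⁻¹ * (-p)) :=
        mul_nonneg hBpos.le (Real.rpow_nonneg ht.1.le _)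
      linarith
  -- lower bound for the integral
  have hF_lb : ∀ k : ℝ, 0 < k →
      k * Vinv k ^ (-p) ≤ ∫ t in (0:ℝ)..k, Vinv t ^ (-p) := by
    intro k hk
    rw [intervalIntegral.integral_of_le hk.le]
    have h1 : ∫ t in Set.Ioc (0:ℝ) k, Vinv k ^ (-p) = k * Vinv k ^ (-p) := by
      rw [setIntegral_const, Real.volume_real_Ioc_of_le hk.le, sub_zero,
        smul_eq_mul]
    rw [← h1]
    refine setIntegral_mono_on (integrableOn_const measure_Ioc_lt_top.ne) ?_
      measurableSet_Ioc ?_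
    · rw [← intervalIntegrable_iff_integrableOn_Ioc_of_le hk.le]
      exact hInt k hk
    · intro t ht
      refine Real.rpow_le_rpow_of_nonpos (hVinv_pos t ht.1) (hVinv_mono t k ht.1.le ht.2)
        (by linarith)
  -- monotonicity of the integral
  have hF_mono : ∀ k k' : ℝ, 0 < k → k ≤ k' →
      (∫ t in (0:ℝ)..k, Vinv t ^ (-p)) ≤ ∫ t in (0:ℝ)..k', Vinv t ^ (-p) := by
    intro k k' hk hkk'
    have hik : IntervalIntegrable (fun t => Vinv t ^ (-p)) volume 0 k := hInt k hk
    have hik' : IntervalIntegrable (fun t => Vinv t ^ (-p)) volume k k' := by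
      refine (hInt k' (hk.trans_le hkk')).mono_set ?_
      rw [Set.uIcc_of_le hkk', Set.uIcc_of_le (hk.le.trans hkk')]
      exact Set.Icc_subset_Icc hk.le (le_refl _)
    have := intervalIntegral.integral_add_adjacent_intervals hik hik'
    have hnn : 0 ≤ ∫ t in k..k', Vinv t ^ (-p) := by
      refine intervalIntegral.integral_nonneg hkk' fun u hu => ?_
      exact Real.rpow_nonneg (hVinv_right u (hk.le.trans hu.1)).1 _
    linarith
  -- key growth estimate: c * V R * R'^p ≤ V R' * R^p
  have hL1 : ∀ R R' : ℝ, 0 < R → R ≤ R' → c * V R * R' ^ p ≤ V R' * R ^ p := by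
    intro R R' hR hRR'
    have hR' : 0 < R' := hR.trans_le hRR'
    set k := V R with hk_def
    set k' := V R' with hk'_def
    have hk : 0 < k := hV_pos R hR
    have hkk' : k ≤ k' := hV_mono.monotoneOn (Set.mem_Ici.2 hR.le) (Set.mem_Ici.2 hR'.le) hRR'
    have h1 : k * Vinv k ^ (-p) ≤ c⁻¹ * k' * Vinv k' ^ (-p) :=
      (hF_lb k hk).trans ((hF_mono k k' hk hkk').trans (h_phyp k' (hk.trans_le hkk')))
    rw [hk_def, hk'_def, hVinv_left R hR.le, hVinv_left R' hR'.le] at h1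
    have hRp : 0 < R ^ p := Real.rpow_pos_of_pos hR p
    have hR'p : 0 < R' ^ p := Real.rpow_pos_of_pos hR' p
    rw [Real.rpow_neg hR.le, Real.rpow_neg hR'.le] at h1
    have h2 : V R / R ^ p ≤ c⁻¹ * V R' / R' ^ p := by
      rw [div_eq_mul_inv, div_eq_mul_inv]
      exact h1
    rw [div_le_div_iff₀ hRp hR'p] at h2
    calc c * V R * R' ^ p = c * (V R * R' ^ p) := by ring
      _ ≤ c * (c⁻¹ * V R' * R ^ p) := mul_le_mul_of_nonneg_left h2 hc0.le
      _ = V R' * R ^ p := by field_simp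
    -- extended monotonicity on [1, ∞)
  have hcont_rpow : ∀ α : ℝ, ContinuousOn (fun s : ℝ => ρ s * s ^ α) (Set.Ici 1) := by
    intro α
    refine ContinuousOn.mul (hρ_cont.mono fun s hs => Set.mem_Ici.2 (le_trans zero_le_one (Set.mem_Ici.1 hs))) ?_
    intro s hs
    exact (Real.continuousAt_rpow_const s α (Or.inl (zero_lt_one.trans_le hs).ne')).continuousWithinAt
  have hρ_dec' : AntitoneOn (fun s : ℝ => ρ s * s ^ α1) (Set.Ici 1) :=
    my_antitoneOn_Ici_one_of_Ioi _ (hcont_rpow α1) hρ_dec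
  have hρ_inc' : MonotoneOn (fun s : ℝ => ρ s * s ^ α2) (Set.Ici 1) :=
    my_monotoneOn_Ici_one_of_Ioi _ (hcont_rpow α2) hρ_inc
  set A : ℝ := (c⁻¹) ^ β with hA_def
  set B : ℝ := (C1 / C0) ^ p with hB_def
  have hβ0 : (0:ℝ) ≤ β := by linarith
  have hA0 : 0 < A := Real.rpow_pos_of_pos (inv_pos.2 hc0) _
  have hB0 : 0 < B := Real.rpow_pos_of_pos (div_pos (hC0.trans hC01) hC0) _
  have hA1 : 1 ≤ A := Real.one_le_rpow ((one_le_inv₀ hc0).2 hc1.le) hβ0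
  have hB1 : 1 ≤ B := Real.one_le_rpow ((one_le_div hC0).2 hC01.le) hp0.le
  -- large-scale estimate
  have hL2 : ∀ r r' : ℝ, 0 < r → r ≤ r' → 1 ≤ Rρ r →
      ρ (Rρ r') * Rρ r' ^ p ≤ A * (r' / r) ^ β * (ρ (Rρ r) * Rρ r ^ p) := by
    intro r r' hr hrr' hR1
    set R := Rρ r with hR_def
    set R' := Rρ r' with hR'_def
    have hr' : 0 < r' := hr.trans_le hrr'
    have hRR' : R ≤ R' := hRρ_mono r r' hr.le hrr'
    have hR'1 : 1 ≤ R' := hR1.trans hRR'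
    have hR : (0:ℝ) < R := lt_of_lt_of_le one_pos hR1
    have hR' : (0:ℝ) < R' := lt_of_lt_of_le one_pos hR'1
    have hvolR : ρ R * V R = r := (hRρ_right r hr.le).2
    have hvolR' : ρ R' * V R' = r' := (hRρ_right r' hr'.le).2
    have hρR : 0 < ρ R := hρ_pos R hR.le
    have hρR' : 0 < ρ R' := hρ_pos R' hR'.le
    have hVR : 0 < V R := hV_pos R hR
    have hVR' : 0 < V R' := hV_pos R' hR'
    have ha := hρ_dec' (Set.mem_Ici.2 hR1) (Set.mem_Ici.2 hR'1) hRR'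
    have hb := hρ_inc' (Set.mem_Ici.2 hR1) (Set.mem_Ici.2 hR'1) hRR'
    simp only [] at ha hb
    have hc' : c * V R * R' ^ p ≤ V R' * R ^ p := hL1 R R' hR hRR'
    have hx2 : 0 < R' ^ α2 := Real.rpow_pos_of_pos hR' _
    have hy1 : 0 < R ^ (p - α2) := Real.rpow_pos_of_pos hR _
    have hy2 : 0 < R' ^ (p - α2) := Real.rpow_pos_of_pos hR' _
    have hsplit : R ^ p = R ^ (p - α2) * R ^ α2 := by
      rw [← Real.rpow_add hR]; ring_nf
    have hsplit' : R' ^ p = R' ^ (p - α2) * R' ^ α2 := by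
      rw [← Real.rpow_add hR']; ring_nf
    have hd2 : c * r * R' ^ (p - α2) ≤ r' * R ^ (p - α2) := by
      rw [← hvolR, ← hvolR']
      have key : (c * (ρ R * V R) * R' ^ (p - α2)) * R' ^ α2 ≤
          (ρ R' * V R' * R ^ (p - α2)) * R' ^ α2 := by
        calc (c * (ρ R * V R) * R' ^ (p - α2)) * R' ^ α2
            = ρ R * (c * V R * R' ^ p) := by rw [hsplit']; ring
          _ ≤ ρ R * (V R' * R ^ p) := mul_le_mul_of_nonneg_left hc' hρR.le
          _ = (ρ R * R ^ α2) * (V R' * R ^ (p - α2)) := by rw [hsplit]; ring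
          _ ≤ (ρ R' * R' ^ α2) * (V R' * R ^ (p - α2)) :=
              mul_le_mul_of_nonneg_right hb (mul_nonneg hVR'.le hy1.le)
          _ = (ρ R' * V R' * R ^ (p - α2)) * R' ^ α2 := by ring
      exact le_of_mul_le_mul_right key hx2
    have hratio : (R' / R) ^ (p - α2) ≤ c⁻¹ * (r' / r) := by
      rw [Real.div_rpow hR'.le hR.le, div_le_iff₀ hy1]
      rw [show c⁻¹ * (r' / r) * R ^ (p - α2) = (r' * R ^ (p - α2)) / (c * r) by
        field_simp]
      rw [le_div_iff₀ (mul_pos hc0 hr)]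
      linear_combination hd2
    have hfin : (R' / R) ^ (p - α1) ≤ (c⁻¹ * (r' / r)) ^ β := by
      have h1 : (R' / R) ^ (p - α1) = ((R' / R) ^ (p - α2)) ^ β := by
        rw [← Real.rpow_mul (div_nonneg hR'.le hR.le)]
        congr 1
        rw [hβ_def]
        field_simp
      rw [h1]
      exact Real.rpow_le_rpow (Real.rpow_nonneg (div_nonneg hR'.le hR.le) _) hratio hβ0
    have hsplitp : R' ^ p = R' ^ α1 * R' ^ (p - α1) := by
      rw [← Real.rpow_add hR']; ring_nf
    have hsplitp2 : R ^ p = R ^ α1 * R ^ (p - α1) := by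
      rw [← Real.rpow_add hR]; ring_nf
    have hdiv : (R' / R) ^ (p - α1) = R' ^ (p - α1) / R ^ (p - α1) :=
      Real.div_rpow hR'.le hR.le _
    have hAeq : (c⁻¹ * (r' / r)) ^ β = A * (r' / r) ^ β :=
      Real.mul_rpow (inv_nonneg.2 hc0.le) (div_nonneg hr'.le hr.le)
    have hRpα1 : 0 < R ^ (p - α1) := Real.rpow_pos_of_pos hR _
    calc ρ R' * R' ^ p = (ρ R' * R' ^ α1) * R' ^ (p - α1) := by rw [hsplitp]; ring
      _ ≤ (ρ R * R ^ α1) * R' ^ (p - α1) :=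
          mul_le_mul_of_nonneg_right ha (Real.rpow_nonneg hR'.le _)
      _ = (ρ R * R ^ p) * ((R' / R) ^ (p - α1)) := by
          rw [hdiv, hsplitp2]; field_simp
      _ ≤ (ρ R * R ^ p) * (c⁻¹ * (r' / r)) ^ β :=
          mul_le_mul_of_nonneg_left hfin
            (mul_nonneg hρR.le (Real.rpow_nonneg hR.le p))
      _ = A * (r' / r) ^ β * (ρ R * R ^ p) := by rw [hAeq]; ring
  -- small-scale estimate
  have hL3 : ∀ r r' : ℝ, 0 < r → r ≤ r' → Rρ r' ≤ 1 →
      ρ (Rρ r') * Rρ r' ^ p ≤ B * (r' / r) ^ β * (ρ (Rρ r) * Rρ r ^ p) := by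
    intro r r' hr hrr' hR'1
    have hr' : 0 < r' := hr.trans_le hrr'
    set R := Rρ r with hR_def
    set R' := Rρ r' with hR'_def
    have hRR' : R ≤ R' := hRρ_mono r r' hr.le hrr'
    have hR : (0:ℝ) < R := hRρ_pos r hr
    have hR' : (0:ℝ) < R' := hRρ_pos r' hr'
    have hR1 : R ≤ 1 := hRR'.trans hR'1
    have hρR : 0 < ρ R := hρ_pos R hR.le
    have hρ_le : ρ R' ≤ ρ R := hρ_anti (Set.mem_Ici.2 hR.le) (Set.mem_Ici.2 hR'.le) hRR'
    have hub := (hRρ_small r' hr' hR'1).2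
    have hlb := (hRρ_small r hr hR1).1
    set ν : ℝ := (N:ℝ)⁻¹ with hν_def
    have hNpos : (0:ℝ) < (N:ℝ) := by linarith
    have hν : (0:ℝ) < ν := inv_pos.2 hNpos
    have hq : R' ^ p ≤ (C1 * r' ^ ν) ^ p := Real.rpow_le_rpow hR'.le hub hp0.le
    have hq2 : (C0 * r ^ ν) ^ p ≤ R ^ p :=
      Real.rpow_le_rpow (mul_nonneg hC0.le (Real.rpow_nonneg hr.le _)) hlb hp0.le
    have hC1 : (0:ℝ) < C1 := hC0.trans hC01
    have key : (C1 * r' ^ ν) ^ p = (C1 / C0) ^ p * (r' / r) ^ (ν * p) * (C0 * r ^ ν) ^ p := by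
      rw [Real.mul_rpow hC1.le (Real.rpow_nonneg hr'.le _),
        Real.mul_rpow hC0.le (Real.rpow_nonneg hr.le _),
        Real.div_rpow hC1.le hC0.le, Real.div_rpow hr'.le hr.le,
        ← Real.rpow_mul hr'.le, ← Real.rpow_mul hr.le]
      have h01 : (0:ℝ) < C0 ^ p := Real.rpow_pos_of_pos hC0 _
      have h02 : (0:ℝ) < r ^ (ν * p) := Real.rpow_pos_of_pos hr _
      field_simp
    have h1 : ρ R' * R' ^ p ≤ ρ R * ((C1 / C0) ^ p * (r' / r) ^ (ν * p) * (C0 * r ^ ν) ^ p) := by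
      rw [← key]
      exact mul_le_mul hρ_le hq (Real.rpow_nonneg hR'.le p) hρR.le
    have h2 : ρ R * ((C1 / C0) ^ p * (r' / r) ^ (ν * p) * (C0 * r ^ ν) ^ p)
        ≤ B * (r' / r) ^ (ν * p) * (ρ R * R ^ p) := by
      have hpref : 0 ≤ B * (r' / r) ^ (ν * p) :=
        mul_nonneg hB0.le (Real.rpow_nonneg (div_nonneg hr'.le hr.le) _)
      calc ρ R * ((C1 / C0) ^ p * (r' / r) ^ (ν * p) * (C0 * r ^ ν) ^ p)
          = (B * (r' / r) ^ (ν * p)) * (ρ R * (C0 * r ^ ν) ^ p) := by rw [hB_def]; ring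
        _ ≤ (B * (r' / r) ^ (ν * p)) * (ρ R * R ^ p) :=
            mul_le_mul_of_nonneg_left (mul_le_mul_of_nonneg_left hq2 hρR.le) hpref
    have hνpβ : ν * p ≤ β := by
      have h3 : ν * p = p / (N:ℝ) := by rw [hν_def]; field_simp
      have h4 : p / (N:ℝ) < 1 := (div_lt_one hNpos).2 hpN
      linarith
    have h5 : (r' / r) ^ (ν * p) ≤ (r' / r) ^ β :=
      Real.rpow_le_rpow_of_exponent_le ((one_le_div hr).2 hrr') hνpβ
    have h6 : B * (r' / r) ^ (ν * p) * (ρ R * R ^ p) ≤ B * (r' / r) ^ β * (ρ R * R ^ p) := by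
      have hm : 0 ≤ ρ R * R ^ p := mul_nonneg hρR.le (Real.rpow_nonneg hR.le p)
      exact mul_le_mul_of_nonneg_right (mul_le_mul_of_nonneg_left h5 hB0.le) hm
    exact h1.trans (h2.trans h6)
  -- combined estimate
  have hL4 : ∀ r r' : ℝ, 0 < r → r ≤ r' →
      ρ (Rρ r') * Rρ r' ^ p ≤ (A * B) * (r' / r) ^ β * (ρ (Rρ r) * Rρ r ^ p) := by
    intro r r' hr hrr'
    have hr' : 0 < r' := hr.trans_le hrr'
    have hfr : 0 ≤ ρ (Rρ r) * Rρ r ^ p :=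
      mul_nonneg (hρ_pos _ (hRρ_right r hr.le).1).le (Real.rpow_nonneg (hRρ_right r hr.le).1 p)
    have hxβ : 0 ≤ (r' / r) ^ β := Real.rpow_nonneg (div_nonneg hr'.le hr.le) β
    rcases le_or_gt (Rρ r') 1 with h1 | h1
    · refine (hL3 r r' hr hrr' h1).trans ?_
      have : B ≤ A * B := le_mul_of_one_le_left hB0.le hA1
      exact mul_le_mul_of_nonneg_right (mul_le_mul_of_nonneg_right this hxβ) hfr
    rcases le_or_gt 1 (Rρ r) with h2 | h2
    · refine (hL2 r r' hr hrr' h2).trans ?_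
      have : A ≤ A * B := le_mul_of_one_le_right hA0.le hB1
      exact mul_le_mul_of_nonneg_right (mul_le_mul_of_nonneg_right this hxβ) hfr
    · set r0 : ℝ := ρ 1 * V 1 with hr0_def
      have hr0 : 0 < r0 := mul_pos hρ1 hV1
      have hRρr0 : Rρ r0 = 1 := hRρ_left 1 (by norm_num)
      have hrr0 : r ≤ r0 := by
        have h3 := hvol_mono (Set.mem_Ici.2 (hRρ_right r hr.le).1)
          (Set.mem_Ici.2 (by norm_num : (0:ℝ) ≤ 1)) h2
        simp only [] at h3
        rw [(hRρ_right r hr.le).2] at h3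
        exact h3.le
      have hr0r' : r0 ≤ r' := by
        have h3 := hvol_mono (Set.mem_Ici.2 (by norm_num : (0:ℝ) ≤ 1))
          (Set.mem_Ici.2 (hRρ_right r' hr'.le).1) h1
        simp only [] at h3
        rw [(hRρ_right r' hr'.le).2] at h3
        exact h3.le
      have hmid := hL3 r r0 hr hrr0 (le_of_eq hRρr0)
      have htop := hL2 r0 r' hr0 hr0r' (le_of_eq hRρr0.symm)
      calc ρ (Rρ r') * Rρ r' ^ p
          ≤ A * (r' / r0) ^ β * (ρ (Rρ r0) * Rρ r0 ^ p) := htop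
        _ ≤ A * (r' / r0) ^ β * (B * (r0 / r) ^ β * (ρ (Rρ r) * Rρ r ^ p)) :=
            mul_le_mul_of_nonneg_left hmid
              (mul_nonneg hA0.le (Real.rpow_nonneg (div_nonneg hr'.le hr0.le) β))
        _ = (A * B) * ((r' / r0) ^ β * (r0 / r) ^ β) * (ρ (Rρ r) * Rρ r ^ p) := by ring
        _ = (A * B) * (r' / r) ^ β * (ρ (Rρ r) * Rρ r ^ p) := by
            rw [← Real.mul_rpow (div_nonneg hr'.le hr0.le) (div_nonneg hr0.le hr.le)]
            congr 3
            field_simp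
  -- conclusion
  refine ⟨A * B, mul_pos hA0 hB0, ?_⟩
  intro lam r hlam hr
  have hlam0 : 0 < lam := lt_of_lt_of_le one_pos hlam
  have hrr' : r ≤ lam * r := le_mul_of_one_le_left hr.le hlam
  have h4 := hL4 r (lam * r) hr hrr'
  have hdiv : lam * r / r = lam := by rw [mul_div_assoc, div_self hr.ne', mul_one]
  rw [hdiv] at h4
  have hrpow : (lam * r) ^ (-e) = lam ^ (-e) * r ^ (-e) := Real.mul_rpow hlam0.le hr.le
  have hlamd : lam ^ β * lam ^ (-e) = lam ^ (β - e) := by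
    rw [← Real.rpow_add hlam0]; ring_nf
  have h5 : ρ (Rρ (lam * r)) * Rρ (lam * r) ^ p * (lam * r) ^ (-e)
      ≤ (A * B * lam ^ β * (ρ (Rρ r) * Rρ r ^ p)) * ((lam * r) ^ (-e)) :=
    mul_le_mul_of_nonneg_right h4 (Real.rpow_nonneg (mul_nonneg hlam0.le hr.le) _)
  refine h5.trans (le_of_eq ?_)
  rw [hrpow, ← hlamd]
  ring
end

section
/- Let λ > 0 and σ ∈ ℝ. Let ψ : (1,∞) → (0,∞) be a continuous strictly increasing function with ψ(s) → ∞ as s → ∞, such that ψ(s)·s^{−λ}·(ln s)^{−σ} → 1 as s → ∞. Then its inverse function ψ^{(-1)} satisfies ψ^{(-1)}(v)·λ^{−σ/λ}·v^{−1/λ}·(ln v)^{σ/λ} → 1 as v → ∞; that is, ψ^{(-1)}(v) = λ^{σ/λ}·v^{1/λ}·(ln v)^{−σ/λ}·(1 + o(1)) as v → ∞. -/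
open Filter

/-- Let `λ > 0`, `σ ∈ ℝ`, and let `ψ : (1,∞) → (0,∞)` be a continuous
strictly increasing function tending to `∞`, with `ψ s * s^{-λ} * (ln s)^{-σ} → 1` as
`s → ∞`. Then the inverse `ψinv` satisfies
`ψinv v * λ^{-σ/λ} * v^{-1/λ} * (ln v)^{σ/λ} → 1` as `v → ∞`. -/
theorem inverse_power_log_asymptotics
    (lam σ : ℝ) (hlam : 0 < lam)
    (ψ ψinv : ℝ → ℝ)
    (hψ_pos : ∀ s : ℝ, 1 < s → 0 < ψ s)
    (hψ_cont : ContinuousOn ψ (Set.Ioi 1))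
    (hψ_mono : StrictMonoOn ψ (Set.Ioi 1))
    (hψ_top : Tendsto ψ atTop atTop)
    (hψ_asymp : Tendsto (fun s : ℝ => ψ s * s ^ (-lam) * Real.log s ^ (-σ))
      atTop (nhds 1))
    (hψinv_left : ∀ s : ℝ, 1 < s → ψinv (ψ s) = s)
    (hψinv_right : ∀ᶠ v in atTop, 1 < ψinv v ∧ ψ (ψinv v) = v) :
    Tendsto (fun v : ℝ =>
        ψinv v * lam ^ (-(σ / lam)) * v ^ (-(1 / lam)) * Real.log v ^ (σ / lam))
      atTop (nhds 1) := by
  have hlog_top := Real.tendsto_log_atTop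
  -- ψinv tends to atTop
  have hg_top : Tendsto ψinv atTop atTop := by
    rw [tendsto_atTop]
    intro M
    filter_upwards [eventually_ge_atTop (ψ (max M 2)), hψinv_right] with v hv hv2
    obtain ⟨hv1, hveq⟩ := hv2
    have hM2 : (1:ℝ) < max M 2 := lt_of_lt_of_le one_lt_two (le_max_right _ _)
    have : max M 2 ≤ ψinv v :=
      (hψ_mono.le_iff_le (Set.mem_Ioi.2 hM2) (Set.mem_Ioi.2 hv1)).mp (by rw [hveq]; exact hv)
    exact le_trans (le_max_left M 2) this
  -- shorthand
  set e : ℝ → ℝ := fun s => ψ s * s ^ (-lam) * Real.log s ^ (-σ) with he_def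
  set r : ℝ → ℝ := fun s => Real.log (ψ s) / (lam * Real.log s) with hr_def
  have he_pos : ∀ᶠ s in atTop, 0 < e s :=
    hψ_asymp.eventually (eventually_gt_nhds (by norm_num : (0:ℝ) < 1))
  -- factorization of ψ
  have hψ_fact : ∀ s : ℝ, 1 < s → ψ s = e s * s ^ lam * Real.log s ^ σ := by
    intro s hs
    have hs0 : (0:ℝ) < s := lt_trans one_pos hs
    have hls : 0 < Real.log s := Real.log_pos hs
    have h1 : (s : ℝ) ^ lam ≠ 0 := (Real.rpow_pos_of_pos hs0 lam).ne'
    have h2 : Real.log s ^ σ ≠ 0 := (Real.rpow_pos_of_pos hls σ).ne'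
    simp only [he_def]
    rw [Real.rpow_neg hs0.le, Real.rpow_neg hls.le]
    field_simp
  -- expansion of log ψ
  have hlogψ : ∀ s : ℝ, 1 < s → 0 < e s →
      Real.log (ψ s) = Real.log (e s) + lam * Real.log s + σ * Real.log (Real.log s) := by
    intro s hs hes
    have hs0 : (0:ℝ) < s := lt_trans one_pos hs
    have hls : 0 < Real.log s := Real.log_pos hs
    have h1 : (s : ℝ) ^ lam ≠ 0 := (Real.rpow_pos_of_pos hs0 lam).ne'
    have h2 : Real.log s ^ σ ≠ 0 := (Real.rpow_pos_of_pos hls σ).ne'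
    rw [hψ_fact s hs, Real.log_mul (by positivity) h2, Real.log_mul hes.ne' h1,
      Real.log_rpow hs0, Real.log_rpow hls]
  -- r tends to 1
  have hr_lim : Tendsto r atTop (nhds 1) := by
    have h1 : Tendsto (fun s => Real.log (e s)) atTop (nhds 0) := by
      have := (Real.continuousAt_log one_ne_zero).tendsto.comp hψ_asymp
      simpa [he_def, Function.comp_def] using this
    have h2 : Tendsto (fun s : ℝ => (lam * Real.log s)⁻¹) atTop (nhds 0) :=
      tendsto_inv_atTop_zero.comp (hlog_top.const_mul_atTop hlam)
    have h3 : Tendsto (fun s : ℝ => Real.log (Real.log s) / Real.log s) atTop (nhds 0) := by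
      have := (Real.isLittleO_log_id_atTop.tendsto_div_nhds_zero).comp hlog_top
      simpa [Function.comp_def] using this
    have hmain : Tendsto (fun s : ℝ =>
        Real.log (e s) * (lam * Real.log s)⁻¹ + 1
          + (σ / lam) * (Real.log (Real.log s) / Real.log s)) atTop (nhds 1) := by
      have := ((h1.mul h2).add (tendsto_const_nhds : Tendsto (fun _ : ℝ => (1:ℝ)) atTop (nhds 1))).add (h3.const_mul (σ / lam))
      simpa using this
    apply hmain.congr'
    filter_upwards [eventually_ge_atTop (2:ℝ), he_pos] with s hs hes
    have hs1 : (1:ℝ) < s := lt_of_lt_of_le one_lt_two hs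
    have hls : 0 < Real.log s := Real.log_pos hs1
    rw [hr_def]
    simp only
    rw [hlogψ s hs1 hes]
    field_simp
  -- key limit on the s-side
  have hkey : Tendsto (fun s : ℝ => e s ^ (-(1 / lam)) * r s ^ (σ / lam)) atTop (nhds 1) := by
    have hA := hψ_asymp.rpow_const (p := -(1 / lam)) (Or.inl one_ne_zero)
    have hB := hr_lim.rpow_const (p := σ / lam) (Or.inl one_ne_zero)
    simpa using hA.mul hB
  -- eventual s-side conditions
  have hsP : ∀ᶠ s in atTop, 2 ≤ s ∧ 0 < e s ∧ 0 < r s :=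
    (eventually_ge_atTop 2).and (he_pos.and
      (hr_lim.eventually (eventually_gt_nhds (by norm_num : (0:ℝ) < 1))))
  -- final: rewrite the goal function eventually
  apply (hkey.comp hg_top).congr'
  filter_upwards [hψinv_right, hg_top.eventually hsP] with v hv hs
  obtain ⟨hv1, hveq⟩ := hv
  obtain ⟨hs2, hes, hrs⟩ := hs
  set s := ψinv v with hsdef
  have hs1 : (1:ℝ) < s := lt_of_lt_of_le one_lt_two hs2
  have hs0 : (0:ℝ) < s := lt_trans one_pos hs1
  have hls : 0 < Real.log s := Real.log_pos hs1
  have hψs : 0 < ψ s := hψ_pos s hs1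
  have hlamls : lam * Real.log s ≠ 0 := by positivity
  have hlogv : Real.log v = r s * (lam * Real.log s) := by
    rw [hr_def]; field_simp [hveq]; rw [hveq]
  have hexp1 : lam * (-(1 / lam)) = -1 := by field_simp
  have hexp2 : σ * (-(1 / lam)) = -(σ / lam) := by field_simp
  show e s ^ (-(1 / lam)) * r s ^ (σ / lam)
      = s * lam ^ (-(σ / lam)) * v ^ (-(1 / lam)) * Real.log v ^ (σ / lam)
  rw [hlogv, ← hveq, hψ_fact s hs1,
    Real.mul_rpow (by positivity) (Real.rpow_nonneg hls.le σ),
    Real.mul_rpow hes.le (Real.rpow_nonneg hs0.le lam),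
    Real.mul_rpow hrs.le (by positivity),
    Real.mul_rpow hlam.le hls.le,
    ← Real.rpow_mul hs0.le, ← Real.rpow_mul hls.le, hexp1, hexp2,
    Real.rpow_neg_one, Real.rpow_neg hls.le, Real.rpow_neg hlam.le]
  have hL : Real.log s ^ (σ / lam) ≠ 0 := (Real.rpow_pos_of_pos hls _).ne'
  have hlamp : lam ^ (σ / lam) ≠ 0 := (Real.rpow_pos_of_pos hlam _).ne'
  field_simp
end
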